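/- arXiv:1510.07255 — 7 statements merged into one kernel-verified Lean document; each statement's English description precedes it below -/
import Mathlib

section
/- Given a characteristic-2 Lie superalgebra datum (g, g₀, g₁, [·,·], sq) over K, every K-submodule h ⊆ g that is closed under the bracket (i.e. [h,h] ⊆ h), even if h is not homogeneous (h need not equal (h ∩ g₀) ⊕ (h ∩ g₁)), is itself a Lie algebra over K under the restricted bracket. (This is the statement that for p = 2 Volichenko algebras are actually Lie algebras.) -/
/-- A characteristic-2 Lie superalgebra datum over a commutative ring `K` (with `2 = 0` in `K`):
a `K`-module `g` with submodules `g₀`, `g₁` forming an internal direct sum decomposition,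
a `K`-bilinear bracket respecting the `ℤ/2`-grading, and a squaring map `sq : g₁ → g₀`,
subject to axioms (i)–(vi). -/
structure Char2LieSuperDatum (K : Type*) (M : Type*) [CommRing K] [AddCommGroup M]
    [Module K M] where
  /-- the even part -/
  g0 : Submodule K M
  /-- the odd part -/
  g1 : Submodule K M
  /-- `g` is the internal direct sum `g₀ ⊕ g₁` -/
  directSum : IsCompl g0 g1
  /-- the `K`-bilinear bracket -/
  br : M →ₗ[K] M →ₗ[K] M
  br_mem_00 : ∀ x ∈ g0, ∀ y ∈ g0, br x y ∈ g0
  br_mem_01 : ∀ x ∈ g0, ∀ y ∈ g1, br x y ∈ g1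
  br_mem_11 : ∀ x ∈ g1, ∀ y ∈ g1, br x y ∈ g0
  /-- the squaring map on the odd part, with values in the even part -/
  sq : g1 → M
  sq_mem : ∀ x : g1, sq x ∈ g0
  /-- (i) the bracket is alternating on `g₀` -/
  br_self_even : ∀ x ∈ g0, br x x = 0
  /-- (i) the Jacobi identity holds on `g₀`, so `(g₀, [·,·])` is a Lie algebra over `K` -/
  jacobi_even : ∀ x ∈ g0, ∀ y ∈ g0, ∀ z ∈ g0,
      br x (br y z) + br y (br z x) + br z (br x y) = 0
  /-- (ii) the bracket is symmetric -/
  br_comm : ∀ x y : M, br x y = br y x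
  /-- (iii) `g₁` is a `g₀`-module -/
  br_action : ∀ x ∈ g0, ∀ y ∈ g0, ∀ z ∈ g1,
      br (br x y) z = br x (br y z) + br y (br x z)
  /-- (iv) the squaring is quadratic -/
  sq_smul : ∀ (a : K) (x : g1), sq (a • x) = (a * a) • sq x
  /-- (v) the bracket on `g₁` is the polarization of the squaring -/
  br_polar : ∀ x y : g1, br (x : M) (y : M) = sq (x + y) + sq x + sq y
  /-- (vi) `[sq x, y] = [x, [x, y]]` -/
  br_sq : ∀ (x : g1) (y : M), br (sq x) y = br (x : M) (br (x : M) y)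

/-- For `p = 2`, Volichenko algebras are actually Lie algebras: any `K`-submodule `h` of `g`
that is closed under the bracket (possibly inhomogeneous, i.e. `h` need not equal
`(h ⊓ g₀) ⊔ (h ⊓ g₁)`) is a Lie algebra over `K` under the restricted bracket. -/
theorem char2Volichenko_isLieAlgebra {K M : Type*} [CommRing K] [AddCommGroup M]
    [Module K M] (htwo : (2 : K) = 0) (D : Char2LieSuperDatum K M)
    (h : Submodule K M) (hclosed : ∀ x ∈ h, ∀ y ∈ h, D.br x y ∈ h) :
    (∀ x ∈ h, D.br x x = 0) ∧
    (∀ x ∈ h, ∀ y ∈ h, ∀ z ∈ h,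
      D.br x (D.br y z) + D.br y (D.br z x) + D.br z (D.br x y) = 0) := by
  -- characteristic 2 facts in M
  have hchar : ∀ m : M, m + m = 0 := by
    intro m
    have h1 : (2 : K) • m = 0 := by rw [htwo, zero_smul]
    rwa [two_smul] at h1
  have h2n : ∀ m : M, (2 : ℕ) • m = 0 := fun m => by rw [two_smul]; exact hchar m
  have h2z : ∀ m : M, (2 : ℤ) • m = 0 := fun m => by rw [two_smul]; exact hchar m
  have cancel : ∀ a b : M, a + b = 0 → a = b := by
    intro a b hab
    have hb : -b = b := neg_eq_of_add_eq_zero_left (hchar b)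
    have : a = -b := by rw [eq_neg_iff_add_eq_zero]; exact hab
    rw [this, hb]
  -- decomposition along g₀ ⊕ g₁
  have hdec : ∀ m : M, ∃ a ∈ D.g0, ∃ b ∈ D.g1, m = a + b := by
    intro m
    have hm : m ∈ D.g0 ⊔ D.g1 := by rw [D.directSum.sup_eq_top]; trivial
    obtain ⟨a, ha, b, hb, hab⟩ := Submodule.mem_sup.mp hm
    exact ⟨a, ha, b, hb, hab.symm⟩
  have hsq0 : D.sq 0 = 0 := by
    have := D.sq_smul 0 0
    simpa using this
  -- the bracket of an odd element with itself vanishes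
  have hodd_self : ∀ x : D.g1, D.br (x : M) (x : M) = 0 := by
    intro x
    have hx0 : x + x = 0 := by ext; exact hchar _
    have := D.br_polar x x
    rw [hx0, hsq0, zero_add, hchar] at this
    exact this
  -- the bracket is alternating on all of M
  have hself : ∀ m : M, D.br m m = 0 := by
    intro m
    obtain ⟨a, ha, b, hb, rfl⟩ := hdec m
    have hbb : D.br b b = 0 := hodd_self ⟨b, hb⟩
    simp only [map_add, LinearMap.add_apply]
    rw [D.br_self_even a ha, hbb, zero_add, add_zero, D.br_comm b a]
    exact hchar _
  -- odd-odd Leibniz, from polarizing axiom (vi)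
  have hoo : ∀ x y : D.g1, ∀ z : M,
      D.br (D.br (x : M) (y : M)) z
        = D.br (x : M) (D.br (y : M) z) + D.br (y : M) (D.br (x : M) z) := by
    intro x y z
    have hpol := D.br_polar x y
    have h1 : D.br (D.br (x : M) (y : M)) z
        = D.br (D.sq (x + y)) z + D.br (D.sq x) z + D.br (D.sq y) z := by
      rw [hpol]; simp [map_add, LinearMap.add_apply]
    rw [D.br_sq (x + y) z, D.br_sq x z, D.br_sq y z] at h1
    have hco : ((x + y : D.g1) : M) = (x : M) + (y : M) := rfl
    rw [hco] at h1
    simp only [map_add, LinearMap.add_apply] at h1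
    rw [h1]
    abel_nf
    simp [h2z, h2n]
  -- the Leibniz identity as a predicate
  set P : M → M → M → Prop := fun a b c =>
    D.br (D.br a b) c = D.br a (D.br b c) + D.br b (D.br a c) with hP
  have Pcomm : ∀ a b c : M, P a b c → P b a c := by
    intro a b c hab
    simp only [hP] at *
    rw [D.br_comm b a, hab, add_comm]
  have Padd1 : ∀ a a' b c : M, P a b c → P a' b c → P (a + a') b c := by
    intro a a' b c h1 h2
    simp only [hP, map_add, LinearMap.add_apply] at *
    rw [h1, h2]; abel
  have Padd3 : ∀ a b c c' : M, P a b c → P a b c' → P a b (c + c') := by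
    intro a b c c' h1 h2
    simp only [hP, map_add, LinearMap.add_apply] at *
    rw [h1, h2]; abel
  -- even, even, even
  have Peee : ∀ a ∈ D.g0, ∀ b ∈ D.g0, ∀ c ∈ D.g0, P a b c := by
    intro a ha b hb c hc
    have hj := D.jacobi_even a ha b hb c hc
    simp only [hP]
    apply cancel
    rw [D.br_comm (D.br a b) c, D.br_comm a c]
    calc D.br c (D.br a b) + (D.br a (D.br b c) + D.br b (D.br c a))
        = D.br a (D.br b c) + D.br b (D.br c a) + D.br c (D.br a b) := by abel
      _ = 0 := hj
  -- even, even, odd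
  have Peeo : ∀ a ∈ D.g0, ∀ b ∈ D.g0, ∀ c ∈ D.g1, P a b c := by
    intro a ha b hb c hc
    exact D.br_action a ha b hb c hc
  have Pee : ∀ a ∈ D.g0, ∀ b ∈ D.g0, ∀ c : M, P a b c := by
    intro a ha b hb c
    obtain ⟨c0, hc0, c1, hc1, rfl⟩ := hdec c
    exact Padd3 _ _ _ _ (Peee a ha b hb c0 hc0) (Peeo a ha b hb c1 hc1)
  -- even, odd, even
  have Peoe : ∀ a ∈ D.g0, ∀ b ∈ D.g1, ∀ c ∈ D.g0, P a b c := by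
    intro a ha b hb c hc
    have hca := D.br_action c hc a ha b hb
    simp only [hP]
    apply cancel
    rw [D.br_comm (D.br a b) c, D.br_comm b (D.br a c), D.br_comm a c,
      D.br_comm b c, hca]
    abel_nf
    simp [h2z, h2n]
  -- even, odd, odd
  have Peoo : ∀ a ∈ D.g0, ∀ b ∈ D.g1, ∀ c ∈ D.g1, P a b c := by
    intro a ha b hb c hc
    have hbc : D.br (D.br b c) a = D.br b (D.br c a) + D.br c (D.br b a) :=
      hoo ⟨b, hb⟩ ⟨c, hc⟩ a
    simp only [hP]
    apply cancel
    rw [D.br_comm (D.br a b) c, D.br_comm a b, D.br_comm a (D.br b c),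
      D.br_comm a c, hbc]
    abel_nf
    simp [h2z, h2n]
  have Peo : ∀ a ∈ D.g0, ∀ b ∈ D.g1, ∀ c : M, P a b c := by
    intro a ha b hb c
    obtain ⟨c0, hc0, c1, hc1, rfl⟩ := hdec c
    exact Padd3 _ _ _ _ (Peoe a ha b hb c0 hc0) (Peoo a ha b hb c1 hc1)
  have Poo : ∀ a ∈ D.g1, ∀ b ∈ D.g1, ∀ c : M, P a b c := by
    intro a ha b hb c
    exact hoo ⟨a, ha⟩ ⟨b, hb⟩ c
  -- the Leibniz identity on all of M, by linearity
  have Pall : ∀ a b c : M, P a b c := by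
    intro a b c
    obtain ⟨a0, ha0, a1, ha1, rfl⟩ := hdec a
    obtain ⟨b0, hb0, b1, hb1, rfl⟩ := hdec b
    refine Padd1 _ _ _ _ (Pcomm _ _ _ (Padd1 _ _ _ _ ?_ ?_))
      (Pcomm _ _ _ (Padd1 _ _ _ _ ?_ ?_))
    · exact Pcomm _ _ _ (Pee a0 ha0 b0 hb0 c)
    · exact Pcomm _ _ _ (Peo a0 ha0 b1 hb1 c)
    · exact Peo b0 hb0 a1 ha1 c
    · exact Poo b1 hb1 a1 ha1 c
  constructor
  · intro x _
    exact hself x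
  · intro x _ y _ z _
    have hp := Pall x y z
    simp only [hP] at hp
    rw [D.br_comm z (D.br x y), hp, D.br_comm z x]
    abel_nf
    simp [h2z, h2n]
end

section
/- The derived subalgebra [aut(Π_{2n}), aut(Π_{2n})] (the K-linear span of all commutators of elements of aut(Π_{2n})) equals the set of block matrices [[A, B],[C, Aᵗ]] with A ∈ M_n(K) arbitrary and B, C symmetric n×n matrices with zero diagonal. -/
open Matrix

/-- The Gram matrix `Π_{2n}`, in `n × n` blocks `[[0, 1ₙ], [1ₙ, 0]]`. -/
noncomputable def PiGram (K : Type*) [Field K] (n : ℕ) :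
    Matrix (Fin n ⊕ Fin n) (Fin n ⊕ Fin n) K :=
  Matrix.fromBlocks 0 1 1 0

/-- The Lie algebra `aut(Π_{2n}) = {X : Xᵀ J + J X = 0}`, as a set of matrices. -/
def autPiSet (K : Type*) [Field K] (n : ℕ) :
    Set (Matrix (Fin n ⊕ Fin n) (Fin n ⊕ Fin n) K) :=
  {X | Xᵀ * PiGram K n + PiGram K n * X = 0}

section Aux

variable {K : Type*} [Field K] [CharP K 2] {n : ℕ}

private lemma mneg {α β : Type*} (M : Matrix α β K) : -M = M := by
  ext i j; exact CharTwo.neg_eq _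

private lemma msub {α β : Type*} (M N : Matrix α β K) : M - N = M + N := by
  ext i j; exact CharTwo.sub_eq_add _ _

private lemma madd_self {α β : Type*} (M : Matrix α β K) : M + M = 0 := by
  ext i j; exact CharTwo.add_self_eq_zero _

private lemma eq_of_madd_eq_zero {α β : Type*} {M N : Matrix α β K}
    (h : M + N = 0) : M = N := by
  have := eq_neg_of_add_eq_zero_left h
  rwa [mneg] at this

private lemma mem_aut (A B C : Matrix (Fin n) (Fin n) K) (hB : Bᵀ = B) (hC : Cᵀ = C) :
    fromBlocks A B C Aᵀ ∈ autPiSet K n := by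
  simp only [autPiSet, Set.mem_setOf_eq, PiGram, fromBlocks_transpose, fromBlocks_multiply,
    Matrix.mul_zero, Matrix.mul_one, Matrix.zero_mul, Matrix.one_mul, zero_add, add_zero,
    fromBlocks_add, transpose_transpose, hB, hC, madd_self, fromBlocks_zero]

private lemma aut_struct {X : Matrix (Fin n ⊕ Fin n) (Fin n ⊕ Fin n) K}
    (hX : X ∈ autPiSet K n) :
    ∃ A B C : Matrix (Fin n) (Fin n) K, Bᵀ = B ∧ Cᵀ = C ∧ X = fromBlocks A B C Aᵀ := by
  obtain ⟨A, B, C, D, rfl⟩ : ∃ A B C D, X = fromBlocks A B C D :=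
    ⟨_, _, _, _, (fromBlocks_toBlocks X).symm⟩
  simp only [autPiSet, Set.mem_setOf_eq, PiGram, fromBlocks_transpose, fromBlocks_multiply,
    Matrix.mul_zero, Matrix.mul_one, Matrix.zero_mul, Matrix.one_mul, zero_add, add_zero,
    fromBlocks_add, ← fromBlocks_zero, fromBlocks_inj] at hX
  obtain ⟨h1, h2, h3, h4⟩ := hX
  exact ⟨A, B, C, eq_of_madd_eq_zero h4, eq_of_madd_eq_zero h1,
    congrArg (fromBlocks A B C) (eq_of_madd_eq_zero h2).symm⟩


private lemma zd_pair (A B : Matrix (Fin n) (Fin n) K) (hB : Bᵀ = B) :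
    (A * B + B * Aᵀ)ᵀ = A * B + B * Aᵀ ∧ ∀ i, (A * B + B * Aᵀ) i i = 0 := by
  constructor
  · simp [transpose_add, transpose_mul, hB, add_comm]
  · intro i
    have hBs : ∀ k, B k i = B i k := fun k => by
      have := congrFun (congrFun hB i) k
      simpa [Matrix.transpose_apply] using this
    simp only [Matrix.add_apply, Matrix.mul_apply, Matrix.transpose_apply]
    have h : ∑ k, A i k * B k i = ∑ k, B i k * A i k :=
      Finset.sum_congr rfl fun k _ => by rw [hBs k, mul_comm]
    rw [h]
    exact CharTwo.add_self_eq_zero _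

private lemma zd_add {B B' : Matrix (Fin n) (Fin n) K}
    (h1 : Bᵀ = B ∧ ∀ i, B i i = 0) (h2 : B'ᵀ = B' ∧ ∀ i, B' i i = 0) :
    (B + B')ᵀ = B + B' ∧ ∀ i, (B + B') i i = 0 := by
  refine ⟨by rw [transpose_add, h1.1, h2.1], fun i => ?_⟩
  rw [Matrix.add_apply, h1.2 i, h2.2 i, add_zero]

private lemma comm_mem_blocks {X Y : Matrix (Fin n ⊕ Fin n) (Fin n ⊕ Fin n) K}
    (hX : X ∈ autPiSet K n) (hY : Y ∈ autPiSet K n) :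
    ∃ A B C : Matrix (Fin n) (Fin n) K, Bᵀ = B ∧ (∀ i, B i i = 0) ∧ Cᵀ = C ∧ (∀ i, C i i = 0) ∧
      X * Y - Y * X = fromBlocks A B C Aᵀ := by
  obtain ⟨A, B, C, hB, hC, rfl⟩ := aut_struct hX
  obtain ⟨A', B', C', hB', hC', rfl⟩ := aut_struct hY
  have p1 := zd_pair A B' hB'
  have p2 := zd_pair A' B hB
  have p3 := zd_pair Aᵀ C' hC'
  have p4 := zd_pair A'ᵀ C hC
  rw [transpose_transpose] at p3 p4
  refine ⟨A * A' + B * C' + (A' * A + B' * C),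
    A * B' + B' * Aᵀ + (A' * B + B * A'ᵀ),
    Aᵀ * C' + C' * A + (A'ᵀ * C + C * A'),
    (zd_add p1 p2).1, (zd_add p1 p2).2, (zd_add p3 p4).1, (zd_add p3 p4).2, ?_⟩
  rw [msub]
  simp only [fromBlocks_multiply, fromBlocks_add, fromBlocks_inj, transpose_add, transpose_mul,
    transpose_transpose, hB, hC, hB', hC']
  refine ⟨trivial, by abel, by abel, by abel⟩


private lemma tE (i j : Fin n) :
    (Matrix.single i j (1 : K))ᵀ = Matrix.single j i 1 := by
  ext a b
  simp [Matrix.single, Matrix.transpose_apply, and_comm]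

/-- The strictly-upper-triangular part. -/
private def upperPart (B : Matrix (Fin n) (Fin n) K) : Matrix (Fin n) (Fin n) K :=
  Matrix.of fun i j => if i < j then B i j else 0

private lemma upperPart_add_transpose {B : Matrix (Fin n) (Fin n) K}
    (hBs : Bᵀ = B) (hBd : ∀ i, B i i = 0) :
    upperPart B + (upperPart B)ᵀ = B := by
  have hsym : ∀ i j, B j i = B i j := fun i j => by
    have := congrFun (congrFun hBs i) j
    simpa [Matrix.transpose_apply] using this
  ext i j
  rcases lt_trichotomy i j with h | h | h
  · simp [upperPart, Matrix.add_apply, Matrix.transpose_apply, h, not_lt_of_gt h]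
  · subst h
    simp [upperPart, Matrix.add_apply, Matrix.transpose_apply, lt_irrefl, hBd i]
  · simp [upperPart, Matrix.add_apply, Matrix.transpose_apply, h, not_lt_of_gt h, hsym i j]

set_option maxHeartbeats 800000 in
private lemma memB {B : Matrix (Fin n) (Fin n) K} (hBs : Bᵀ = B) (hBd : ∀ i, B i i = 0) :
    ∃ X ∈ autPiSet K n, ∃ Y ∈ autPiSet K n,
      fromBlocks 0 B 0 (0 : Matrix (Fin n) (Fin n) K) = X * Y - Y * X := by
  set N := upperPart B with hN
  have hx : fromBlocks N 0 0 Nᵀ ∈ autPiSet K n :=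
    mem_aut N 0 0 transpose_zero transpose_zero
  have hy : fromBlocks 0 1 0 (0 : Matrix (Fin n) (Fin n) K) ∈ autPiSet K n := by
    simpa using mem_aut (0 : Matrix (Fin n) (Fin n) K) 1 0 transpose_one transpose_zero
  refine ⟨_, hx, _, hy, ?_⟩
  rw [msub]
  simp [fromBlocks_multiply, fromBlocks_add, upperPart_add_transpose hBs hBd]
  exact (upperPart_add_transpose hBs hBd).symm

set_option maxHeartbeats 800000 in
private lemma memC {C : Matrix (Fin n) (Fin n) K} (hCs : Cᵀ = C) (hCd : ∀ i, C i i = 0) :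
    ∃ X ∈ autPiSet K n, ∃ Y ∈ autPiSet K n,
      fromBlocks 0 0 C (0 : Matrix (Fin n) (Fin n) K) = X * Y - Y * X := by
  set N := upperPart C with hN
  have hx : fromBlocks N 0 0 Nᵀ ∈ autPiSet K n :=
    mem_aut N 0 0 transpose_zero transpose_zero
  have hy : fromBlocks 0 0 1 (0 : Matrix (Fin n) (Fin n) K) ∈ autPiSet K n := by
    simpa using mem_aut (0 : Matrix (Fin n) (Fin n) K) 0 1 transpose_zero transpose_one
  refine ⟨_, hx, _, hy, ?_⟩
  rw [msub]
  have h := upperPart_add_transpose hCs hCd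
  rw [add_comm] at h
  simp [fromBlocks_multiply, fromBlocks_add, h]
  exact h.symm

set_option maxHeartbeats 800000 in
private lemma memA (i j : Fin n) :
    ∃ X ∈ autPiSet K n, ∃ Y ∈ autPiSet K n,
      fromBlocks (Matrix.single i j (1 : K)) 0 0 (Matrix.single i j (1 : K))ᵀ
        = X * Y - Y * X := by
  by_cases hij : i = j
  · subst hij
    have hx : fromBlocks 0 (Matrix.single i i (1 : K)) 0 0 ∈ autPiSet K n := by
      simpa using mem_aut (0 : Matrix (Fin n) (Fin n) K) (Matrix.single i i 1) 0
        (by rw [tE]) transpose_zero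
    have hy : fromBlocks 0 0 (Matrix.single i i (1 : K)) 0 ∈ autPiSet K n := by
      simpa using mem_aut (0 : Matrix (Fin n) (Fin n) K) 0 (Matrix.single i i 1)
        transpose_zero (by rw [tE])
    refine ⟨_, hx, _, hy, ?_⟩
    rw [msub]
    simp [fromBlocks_multiply, fromBlocks_add, tE]
  · have hCms : (Matrix.single i j (1 : K) + Matrix.single j i 1)ᵀ
        = Matrix.single i j (1 : K) + Matrix.single j i 1 := by
      rw [transpose_add, tE, tE, add_comm]
    have hx : fromBlocks 0 (Matrix.single i i (1 : K)) 0 0 ∈ autPiSet K n := by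
      simpa using mem_aut (0 : Matrix (Fin n) (Fin n) K) (Matrix.single i i 1) 0
        (by rw [tE]) transpose_zero
    have hy : fromBlocks 0 0 (Matrix.single i j (1 : K) + Matrix.single j i 1) 0
        ∈ autPiSet K n := by
      simpa using mem_aut (0 : Matrix (Fin n) (Fin n) K) 0
        (Matrix.single i j 1 + Matrix.single j i 1) transpose_zero hCms
    refine ⟨_, hx, _, hy, ?_⟩
    rw [msub]
    simp [fromBlocks_multiply, fromBlocks_add, tE, Matrix.mul_add, Matrix.add_mul,
      hij, Ne.symm hij]


/-- The embedding `A ↦ [[A,0],[0,Aᵀ]]` as a linear map. -/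
private def phiMap (K : Type*) [Field K] (n : ℕ) :
    Matrix (Fin n) (Fin n) K →ₗ[K] Matrix (Fin n ⊕ Fin n) (Fin n ⊕ Fin n) K where
  toFun A := fromBlocks A 0 0 Aᵀ
  map_add' A A' := by
    rw [fromBlocks_add]
    simp [transpose_add]
  map_smul' c A := by
    rw [fromBlocks_smul]
    simp [transpose_smul]

private lemma phi_mem_span (A : Matrix (Fin n) (Fin n) K) :
    fromBlocks A 0 0 Aᵀ ∈ Submodule.span K
      {Z : Matrix (Fin n ⊕ Fin n) (Fin n ⊕ Fin n) K |
        ∃ X ∈ autPiSet K n, ∃ Y ∈ autPiSet K n, Z = X * Y - Y * X} := by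
  have h1 : fromBlocks A 0 0 Aᵀ
      = ∑ i, ∑ j, A i j • phiMap K n (Matrix.single i j 1) := by
    show phiMap K n A = _
    conv_lhs => rw [matrix_eq_sum_single A]
    rw [map_sum]
    refine Finset.sum_congr rfl fun i _ => ?_
    rw [map_sum]
    refine Finset.sum_congr rfl fun j _ => ?_
    rw [← _root_.map_smul]
    congr 1
    rw [smul_single, smul_eq_mul, mul_one]
  rw [h1]
  refine Submodule.sum_mem _ fun i _ => Submodule.sum_mem _ fun j _ =>
    Submodule.smul_mem _ _ (Submodule.subset_span ?_)
  exact memA i j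


end Aux

/-- For `p = 2`, the derived subalgebra `[aut(Π_{2n}), aut(Π_{2n})]` (the `K`-linear span of
all commutators of elements of `aut(Π_{2n})`) consists exactly of the block matrices
`[[A, B], [C, Aᵀ]]` with `A` arbitrary and `B`, `C` symmetric with zero diagonal. -/
theorem derived_autPi_eq_blocks {K : Type*} [Field K] [CharP K 2] {n : ℕ} (hn : 1 ≤ n) :
    (Submodule.span K
        {Z : Matrix (Fin n ⊕ Fin n) (Fin n ⊕ Fin n) K |
          ∃ X ∈ autPiSet K n, ∃ Y ∈ autPiSet K n, Z = X * Y - Y * X} : Set _) =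
      {Z | ∃ A B C : Matrix (Fin n) (Fin n) K,
          B.IsSymm ∧ (∀ i, B i i = 0) ∧ C.IsSymm ∧ (∀ i, C i i = 0) ∧
          Z = Matrix.fromBlocks A B C Aᵀ} := by
  apply Set.Subset.antisymm
  · intro Z hZ
    replace hZ : Z ∈ Submodule.span K
        {Z : Matrix (Fin n ⊕ Fin n) (Fin n ⊕ Fin n) K |
          ∃ X ∈ autPiSet K n, ∃ Y ∈ autPiSet K n, Z = X * Y - Y * X} := hZ
    induction hZ using Submodule.span_induction with
    | mem x hx =>
      obtain ⟨X, hX, Y, hY, rfl⟩ := hx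
      obtain ⟨A, B, C, h1, h2, h3, h4, h5⟩ := comm_mem_blocks hX hY
      exact ⟨A, B, C, h1, h2, h3, h4, h5⟩
    | zero =>
      refine ⟨0, 0, 0, ?_, ?_, ?_, ?_, ?_⟩ <;>
        simp [Matrix.IsSymm, fromBlocks_zero]
    | add x y hx hy ihx ihy =>
      obtain ⟨A, B, C, h1, h2, h3, h4, rfl⟩ := ihx
      obtain ⟨A', B', C', h1', h2', h3', h4', rfl⟩ := ihy
      refine ⟨A + A', B + B', C + C', ?_, ?_, ?_, ?_, ?_⟩
      · rw [Matrix.IsSymm, transpose_add, h1.eq, h1'.eq]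
      · intro i; rw [Matrix.add_apply, h2 i, h2' i, add_zero]
      · rw [Matrix.IsSymm, transpose_add, h3.eq, h3'.eq]
      · intro i; rw [Matrix.add_apply, h4 i, h4' i, add_zero]
      · simp [fromBlocks_add, transpose_add]
    | smul c x hx ih =>
      obtain ⟨A, B, C, h1, h2, h3, h4, rfl⟩ := ih
      refine ⟨c • A, c • B, c • C, ?_, ?_, ?_, ?_, ?_⟩
      · rw [Matrix.IsSymm, transpose_smul, h1.eq]
      · intro i; rw [Matrix.smul_apply, h2 i, smul_zero]
      · rw [Matrix.IsSymm, transpose_smul, h3.eq]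
      · intro i; rw [Matrix.smul_apply, h4 i, smul_zero]
      · rw [fromBlocks_smul]
        simp [transpose_smul]
  · rintro Z ⟨A, B, C, hBs, hBd, hCs, hCd, rfl⟩
    have hsplit : fromBlocks A B C Aᵀ
        = fromBlocks A 0 0 Aᵀ + fromBlocks 0 B 0 0 + fromBlocks 0 0 C 0 := by
      simp [fromBlocks_add]
    rw [hsplit]
    exact Submodule.add_mem _
      (Submodule.add_mem _ (phi_mem_span A) (Submodule.subset_span (memB hBs hBd)))
      (Submodule.subset_span (memC hCs hCd))
end

section
/- Let g¹ := {[[A,B],[C,Aᵗ]] : A ∈ M_n(K) arbitrary, B and C ZD} ⊆ aut(Π_{2n}), and define the half-trace htr([[A,B],[C,Aᵗ]]) := tr A. Then htr vanishes on the derived subalgebra [g¹, g¹] (htr is a trace on g¹), and moreover [g¹, g¹] = {X ∈ g¹ : htr(X) = 0}; i.e. the second derived algebra aut⁽²⁾(Π_{2n}) is exactly the traceless (htr = 0) subalgebra of aut⁽¹⁾(Π_{2n}). -/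
open Matrix

/-- The Lie algebra `g¹ = aut⁽¹⁾(Π_{2n})`: block matrices `[[A, B], [C, Aᵀ]]` with `A`
arbitrary and `B`, `C` symmetric with zero diagonal (ZD). -/
def gOneSet (K : Type*) [Field K] (n : ℕ) :
    Set (Matrix (Fin n ⊕ Fin n) (Fin n ⊕ Fin n) K) :=
  {Z | ∃ A B C : Matrix (Fin n) (Fin n) K,
      B.IsSymm ∧ (∀ i, B i i = 0) ∧ C.IsSymm ∧ (∀ i, C i i = 0) ∧
      Z = Matrix.fromBlocks A B C Aᵀ}

/-- The half-trace `htr([[A, B], [C, Aᵀ]]) = tr A`, i.e. the trace of the top-left block. -/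
noncomputable def halfTrace {K : Type*} [Field K] {n : ℕ}
    (X : Matrix (Fin n ⊕ Fin n) (Fin n ⊕ Fin n) K) : K :=
  ∑ i : Fin n, X (Sum.inl i) (Sum.inl i)

/-- The derived subalgebra `[g¹, g¹]`: the `K`-linear span of all commutators of
elements of `g¹`. -/
def derivedGOne (K : Type*) [Field K] (n : ℕ) :
    Submodule K (Matrix (Fin n ⊕ Fin n) (Fin n ⊕ Fin n) K) :=
  Submodule.span K
    {Z | ∃ X ∈ gOneSet K n, ∃ Y ∈ gOneSet K n, Z = X * Y - Y * X}

namespace HTAux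
set_option linter.unusedSectionVars false

variable {K : Type*} [Field K] [CharP K 2] {n : ℕ}

/-- In char 2, matrix subtraction is addition. -/
lemma msub {m m' : Type*} (X Y : Matrix m m' K) : X - Y = X + Y := by
  ext i j
  simp [Matrix.sub_apply, Matrix.add_apply, CharTwo.sub_eq_add]

/-- Pairing of ZD symmetric matrices vanishes in char 2. -/
lemma pairing (B C : Matrix (Fin n) (Fin n) K) (hBs : B.IsSymm) (hB0 : ∀ i, B i i = 0)
    (hCs : C.IsSymm) : ∑ i, ∑ j, B i j * C j i = 0 := by
  rw [← Finset.sum_product']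
  refine Finset.sum_ninvolution Prod.swap (fun p => ?_) (fun p hp => ?_)
    (fun p => Finset.mem_univ _) (fun p => Prod.swap_swap p)
  · have h1 : B p.2 p.1 = B p.1 p.2 := hBs.apply p.1 p.2
    have h2 : C p.1 p.2 = C p.2 p.1 := hCs.apply p.2 p.1
    simp only [Prod.fst_swap, Prod.snd_swap, h1, h2]
    exact CharTwo.add_self_eq_zero _
  · intro hsw
    apply hp
    have : p.2 = p.1 := congrArg Prod.fst hsw
    rw [this, hB0, zero_mul]

lemma comm_mem {X Y : Matrix (Fin n ⊕ Fin n) (Fin n ⊕ Fin n) K}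
    (hX : X ∈ gOneSet K n) (hY : Y ∈ gOneSet K n) : X * Y - Y * X ∈ derivedGOne K n :=
  Submodule.subset_span ⟨X, hX, Y, hY, rfl⟩

lemma diag_block_mem (A : Matrix (Fin n) (Fin n) K) :
    fromBlocks A 0 0 Aᵀ ∈ gOneSet K n :=
  ⟨A, 0, 0, isSymm_zero, fun _ => rfl, isSymm_zero, fun _ => rfl, rfl⟩

lemma fromBlocks_sub {l m o p : Type*} (A A' : Matrix l m K) (B B' : Matrix l o K)
    (C C' : Matrix p m K) (D D' : Matrix p o K) :
    fromBlocks A B C D - fromBlocks A' B' C' D' =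
      fromBlocks (A - A') (B - B') (C - C') (D - D') := by
  simp [sub_eq_add_neg, fromBlocks_neg, fromBlocks_add]

/-- Commutator of two diagonal-type block matrices. -/
lemma slA_mem (A A' : Matrix (Fin n) (Fin n) K) :
    fromBlocks (A * A' - A' * A) 0 0 ((A * A' - A' * A)ᵀ) ∈ derivedGOne K n := by
  have h := comm_mem (diag_block_mem A) (diag_block_mem A')
  have e : fromBlocks A 0 0 Aᵀ * fromBlocks A' 0 0 A'ᵀ -
      fromBlocks A' 0 0 A'ᵀ * fromBlocks A 0 0 Aᵀ =
      fromBlocks (A * A' - A' * A) 0 0 ((A * A' - A' * A)ᵀ) := by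
    simp only [fromBlocks_multiply, fromBlocks_sub, Matrix.mul_zero, Matrix.zero_mul,
      add_zero, zero_add, sub_zero, zero_sub, neg_zero, transpose_sub, transpose_mul]
    rw [msub (Aᵀ * A'ᵀ), msub (A'ᵀ * Aᵀ), add_comm (A'ᵀ * Aᵀ)]
  rwa [e] at h

/-- The linear embedding `A ↦ fromBlocks A 0 0 Aᵀ`. -/
def LA : Matrix (Fin n) (Fin n) K →ₗ[K] Matrix (Fin n ⊕ Fin n) (Fin n ⊕ Fin n) K where
  toFun A := fromBlocks A 0 0 Aᵀ
  map_add' A A' := by rw [transpose_add, fromBlocks_add, add_zero]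
  map_smul' c A := by rw [transpose_smul, fromBlocks_smul, smul_zero]; rfl

def LB : Matrix (Fin n) (Fin n) K →ₗ[K] Matrix (Fin n ⊕ Fin n) (Fin n ⊕ Fin n) K where
  toFun B := fromBlocks 0 B 0 0
  map_add' B B' := by rw [fromBlocks_add]; simp
  map_smul' c B := by rw [fromBlocks_smul]; simp

def LC : Matrix (Fin n) (Fin n) K →ₗ[K] Matrix (Fin n ⊕ Fin n) (Fin n ⊕ Fin n) K where
  toFun C := fromBlocks 0 0 C 0
  map_add' C C' := by rw [fromBlocks_add]; simp
  map_smul' c C := by rw [fromBlocks_smul]; simp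

lemma traceless_mem (hn : 1 ≤ n) (A : Matrix (Fin n) (Fin n) K) (hA : Matrix.trace A = 0) :
    fromBlocks A 0 0 Aᵀ ∈ derivedGOne K n := by
  set W : Submodule K (Matrix (Fin n) (Fin n) K) := (derivedGOne K n).comap LA with hW
  have key : ∀ (A₁ A₂ : Matrix (Fin n) (Fin n) K), A₁ * A₂ - A₂ * A₁ ∈ W := by
    intro A₁ A₂
    have := slA_mem A₁ A₂
    simpa [hW, Submodule.mem_comap, LA] using this
  have gen1 : ∀ (i j : Fin n) (c : K), i ≠ j → Matrix.single i j c ∈ W := by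
    intro i j c hij
    have h := key (Matrix.single i i (1 : K)) (Matrix.single i j c)
    rwa [single_mul_single_same, one_mul, Matrix.single_mul_single_of_ne c i j _ (Ne.symm hij), sub_zero] at h
  have gen2 : ∀ (i : Fin n) (c : K), i ≠ ⟨0, hn⟩ →
      Matrix.single i i c - Matrix.single ⟨0, hn⟩ ⟨0, hn⟩ c ∈ W := by
    intro i c hi
    have h := key (Matrix.single i (⟨0, hn⟩ : Fin n) c) (Matrix.single (⟨0, hn⟩ : Fin n) i (1 : K))
    rwa [single_mul_single_same, mul_one, single_mul_single_same, one_mul] at h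
  suffices h : A ∈ W by simpa [hW, Submodule.mem_comap, LA] using h
  set z : Fin n := ⟨0, hn⟩ with hz
  have hsplit : A = (∑ i, ∑ j, if i = j then 0 else Matrix.single i j (A i j))
      + ∑ i, (Matrix.single i i (A i i) - Matrix.single z z (A i i)) := by
    have h2 : ∑ i, (Matrix.single i i (A i i) - Matrix.single z z (A i i))
        = (∑ i, Matrix.single i i (A i i)) - Matrix.single z z (Matrix.trace A) := by
      rw [Finset.sum_sub_distrib]
      congr 1
      rw [Matrix.trace]
      induction (Finset.univ : Finset (Fin n)) using Finset.induction with
      | empty => simp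
      | insert _ _ hni ih =>
          rw [Finset.sum_insert hni, Finset.sum_insert hni, ih, Matrix.diag,
            single_add]
    rw [h2, hA, single_zero, sub_zero]
    have h3 : ∑ i, Matrix.single i i (A i i)
        = ∑ i, ∑ j, if i = j then Matrix.single i j (A i j) else 0 := by
      refine Finset.sum_congr rfl fun i _ => ?_
      rw [Finset.sum_ite_eq (Finset.univ) i (fun j => Matrix.single i j (A i j))]
      simp
    rw [h3, ← Finset.sum_add_distrib]
    nth_rewrite 1 [matrix_eq_sum_single A]
    refine Finset.sum_congr rfl fun i _ => ?_
    rw [← Finset.sum_add_distrib]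
    refine Finset.sum_congr rfl fun j _ => ?_
    by_cases h : i = j <;> simp [h]
  rw [hsplit]
  refine Submodule.add_mem _ (Submodule.sum_mem _ fun i _ => Submodule.sum_mem _ fun j _ => ?_)
    (Submodule.sum_mem _ fun i _ => ?_)
  · by_cases h : i = j
    · simp [h, Submodule.zero_mem]
    · simpa [h] using gen1 i j (A i j) h
  · by_cases h : i = z
    · simp [h, Submodule.zero_mem]
    · exact gen2 i (A i i) h

/-- Decomposition of a symmetric zero-diagonal matrix into basic symmetric pairs. -/
lemma zd_decomp (B : Matrix (Fin n) (Fin n) K) (hs : B.IsSymm) (h0 : ∀ i, B i i = 0) :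
    B = ∑ p ∈ Finset.univ.filter (fun p : Fin n × Fin n => p.1 < p.2),
        B p.1 p.2 • (Matrix.single p.1 p.2 (1 : K) + Matrix.single p.2 p.1 (1 : K)) := by
  have hall : B = ∑ p : Fin n × Fin n, B p.1 p.2 • Matrix.single p.1 p.2 (1 : K) := by
    nth_rewrite 1 [matrix_eq_sum_single B]
    rw [← Finset.sum_product']
    refine Finset.sum_congr rfl fun p _ => ?_
    rw [smul_single, smul_eq_mul, mul_one]
  have hne : ∑ p : Fin n × Fin n, B p.1 p.2 • Matrix.single p.1 p.2 (1 : K)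
      = ∑ p ∈ Finset.univ.filter (fun p : Fin n × Fin n => p.1 ≠ p.2),
          B p.1 p.2 • Matrix.single p.1 p.2 (1 : K) := by
    symm
    refine Finset.sum_filter_of_ne fun p _ hp => ?_
    intro h
    apply hp
    have : B p.1 p.2 = 0 := by rw [show p.2 = p.1 from h.symm, h0]
    rw [this, zero_smul]
  have hsplit := Finset.sum_filter_add_sum_filter_not
    (Finset.univ.filter (fun p : Fin n × Fin n => p.1 ≠ p.2))
    (fun p : Fin n × Fin n => p.1 < p.2)
    (fun p : Fin n × Fin n => B p.1 p.2 • Matrix.single p.1 p.2 (1 : K))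
  have e1 : (Finset.univ.filter (fun p : Fin n × Fin n => p.1 ≠ p.2)).filter
      (fun p : Fin n × Fin n => p.1 < p.2)
      = Finset.univ.filter (fun p : Fin n × Fin n => p.1 < p.2) := by
    rw [Finset.filter_filter]
    refine Finset.filter_congr fun p _ => ?_
    constructor
    · exact fun h => h.2
    · exact fun h => ⟨ne_of_lt h, h⟩
  have e2 : (Finset.univ.filter (fun p : Fin n × Fin n => p.1 ≠ p.2)).filter
      (fun p : Fin n × Fin n => ¬ p.1 < p.2)
      = Finset.univ.filter (fun p : Fin n × Fin n => p.2 < p.1) := by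
    rw [Finset.filter_filter]
    refine Finset.filter_congr fun p _ => ?_
    constructor
    · exact fun h => lt_of_le_of_ne (not_lt.mp h.2) (Ne.symm h.1)
    · exact fun h => ⟨(ne_of_lt h).symm, not_lt.mpr (le_of_lt h)⟩
  have e3 : ∑ p ∈ Finset.univ.filter (fun p : Fin n × Fin n => p.2 < p.1),
        B p.1 p.2 • Matrix.single p.1 p.2 (1 : K)
      = ∑ p ∈ Finset.univ.filter (fun p : Fin n × Fin n => p.1 < p.2),
        B p.1 p.2 • Matrix.single p.2 p.1 (1 : K) := by
    refine Finset.sum_nbij' Prod.swap Prod.swap ?_ ?_ ?_ ?_ ?_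
    · intro p hp
      simp only [Finset.mem_filter, Finset.mem_univ, true_and] at hp ⊢
      exact hp
    · intro p hp
      simp only [Finset.mem_filter, Finset.mem_univ, true_and] at hp ⊢
      exact hp
    · intro p _; exact Prod.swap_swap p
    · intro p _; exact Prod.swap_swap p
    · intro p _
      simp only [Prod.fst_swap, Prod.snd_swap]
      rw [hs.apply p.1 p.2]
  conv_lhs => rw [hall, hne, ← hsplit, e1, e2, e3]
  rw [← Finset.sum_add_distrib]
  refine Finset.sum_congr rfl fun p _ => ?_
  rw [smul_add]

lemma std_transpose (i j : Fin n) (c : K) :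
    (Matrix.single i j c)ᵀ = Matrix.single j i c := by
  ext a b
  simp only [transpose_apply, Matrix.single, of_apply]
  by_cases h1 : i = b <;> by_cases h2 : j = a <;> simp [h1, h2]

lemma pairGen_symm {i j : Fin n} :
    (Matrix.single i j (1 : K) + Matrix.single j i 1).IsSymm := by
  rw [Matrix.IsSymm, transpose_add, std_transpose, std_transpose, add_comm]

lemma pairGen_diag {i j : Fin n} (hij : i ≠ j) (k : Fin n) :
    (Matrix.single i j (1 : K) + Matrix.single j i 1 : Matrix (Fin n) (Fin n) K) k k = 0 := by
  have h1 : Matrix.single i j (1 : K) k k = 0 := by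
    apply single_apply_of_ne
    rintro ⟨rfl, rfl⟩; exact hij rfl
  have h2 : Matrix.single j i (1 : K) k k = 0 := by
    apply single_apply_of_ne
    rintro ⟨rfl, rfl⟩; exact hij rfl
  rw [Matrix.add_apply, h1, h2, add_zero]

lemma pairGen_in_gOneB {i j : Fin n} (hij : i ≠ j) :
    fromBlocks 0 (Matrix.single i j (1 : K) + Matrix.single j i 1) 0 0 ∈ gOneSet K n :=
  ⟨0, _, 0, pairGen_symm, pairGen_diag hij, isSymm_zero, fun _ => rfl, by
    rw [transpose_zero]⟩

lemma pairGen_in_gOneC {i j : Fin n} (hij : i ≠ j) :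
    fromBlocks 0 0 (Matrix.single i j (1 : K) + Matrix.single j i 1) 0 ∈ gOneSet K n :=
  ⟨0, 0, _, isSymm_zero, fun _ => rfl, pairGen_symm, pairGen_diag hij, by
    rw [transpose_zero]⟩

lemma offB_mem {i j : Fin n} (hij : i ≠ j) (c : K) :
    fromBlocks 0 (c • (Matrix.single i j (1 : K) + Matrix.single j i 1)) 0 0
      ∈ derivedGOne K n := by
  have h := comm_mem (diag_block_mem (c • Matrix.single i i (1 : K))) (pairGen_in_gOneB hij)
  have hAt : (c • Matrix.single i i (1 : K))ᵀ = c • Matrix.single i i (1 : K) := by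
    rw [transpose_smul, std_transpose]
  have hprod1 : (c • Matrix.single i i (1 : K)) *
      (Matrix.single i j (1 : K) + Matrix.single j i 1) = c • Matrix.single i j (1 : K) := by
    rw [smul_mul_assoc, mul_add, single_mul_single_same, one_mul,
      Matrix.single_mul_single_of_ne (1 : K) i i _ hij, add_zero]
  have hprod2 : (Matrix.single i j (1 : K) + Matrix.single j i 1) *
      (c • Matrix.single i i (1 : K)) = c • Matrix.single j i (1 : K) := by
    rw [mul_smul_comm, add_mul, Matrix.single_mul_single_of_ne (1 : K) i j _ (Ne.symm hij),
      single_mul_single_same, one_mul, zero_add]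
  have e : fromBlocks (c • Matrix.single i i (1 : K)) 0 0 ((c • Matrix.single i i (1 : K))ᵀ) *
        fromBlocks 0 (Matrix.single i j (1 : K) + Matrix.single j i 1) 0 0 -
      fromBlocks 0 (Matrix.single i j (1 : K) + Matrix.single j i 1) 0 0 *
        fromBlocks (c • Matrix.single i i (1 : K)) 0 0 ((c • Matrix.single i i (1 : K))ᵀ) =
      fromBlocks 0 (c • (Matrix.single i j (1 : K) + Matrix.single j i 1)) 0 0 := by
    rw [hAt]
    simp only [fromBlocks_multiply, fromBlocks_sub, Matrix.mul_zero, Matrix.zero_mul,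
      add_zero, zero_add, sub_zero, zero_sub, neg_zero, sub_self]
    try rw [hprod1, hprod2, msub, smul_add]
    try simp
  rwa [e] at h

lemma offC_mem {i j : Fin n} (hij : i ≠ j) (c : K) :
    fromBlocks 0 0 (c • (Matrix.single i j (1 : K) + Matrix.single j i 1)) 0
      ∈ derivedGOne K n := by
  have h := comm_mem (diag_block_mem (c • Matrix.single i i (1 : K))) (pairGen_in_gOneC hij)
  have hAt : (c • Matrix.single i i (1 : K))ᵀ = c • Matrix.single i i (1 : K) := by
    rw [transpose_smul, std_transpose]
  have hprod1 : (c • Matrix.single i i (1 : K)) *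
      (Matrix.single i j (1 : K) + Matrix.single j i 1) = c • Matrix.single i j (1 : K) := by
    rw [smul_mul_assoc, mul_add, single_mul_single_same, one_mul,
      Matrix.single_mul_single_of_ne (1 : K) i i _ hij, add_zero]
  have hprod2 : (Matrix.single i j (1 : K) + Matrix.single j i 1) *
      (c • Matrix.single i i (1 : K)) = c • Matrix.single j i (1 : K) := by
    rw [mul_smul_comm, add_mul, Matrix.single_mul_single_of_ne (1 : K) i j _ (Ne.symm hij),
      single_mul_single_same, one_mul, zero_add]
  have e : fromBlocks (c • Matrix.single i i (1 : K)) 0 0 ((c • Matrix.single i i (1 : K))ᵀ) *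
        fromBlocks 0 0 (Matrix.single i j (1 : K) + Matrix.single j i 1) 0 -
      fromBlocks 0 0 (Matrix.single i j (1 : K) + Matrix.single j i 1) 0 *
        fromBlocks (c • Matrix.single i i (1 : K)) 0 0 ((c • Matrix.single i i (1 : K))ᵀ) =
      fromBlocks 0 0 (c • (Matrix.single i j (1 : K) + Matrix.single j i 1)) 0 := by
    rw [hAt]
    simp only [fromBlocks_multiply, fromBlocks_sub, Matrix.mul_zero, Matrix.zero_mul,
      add_zero, zero_add, sub_zero, zero_sub, neg_zero, sub_self]
    try rw [hprod1, hprod2, msub, smul_add]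
    try simp
  rwa [e] at h

lemma zdB_mem (B : Matrix (Fin n) (Fin n) K) (hs : B.IsSymm) (h0 : ∀ i, B i i = 0) :
    fromBlocks 0 B 0 0 ∈ derivedGOne K n := by
  have : fromBlocks 0 B 0 0 = LB B := rfl
  rw [this, zd_decomp B hs h0, map_sum]
  refine Submodule.sum_mem _ fun p hp => ?_
  have hlt : p.1 < p.2 := by
    simp only [Finset.mem_filter, Finset.mem_univ, true_and] at hp
    exact hp
  exact offB_mem (ne_of_lt hlt) (B p.1 p.2)

lemma zdC_mem (C : Matrix (Fin n) (Fin n) K) (hs : C.IsSymm) (h0 : ∀ i, C i i = 0) :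
    fromBlocks 0 0 C 0 ∈ derivedGOne K n := by
  have : fromBlocks 0 0 C 0 = LC C := rfl
  rw [this, zd_decomp C hs h0, map_sum]
  refine Submodule.sum_mem _ fun p hp => ?_
  have hlt : p.1 < p.2 := by
    simp only [Finset.mem_filter, Finset.mem_univ, true_and] at hp
    exact hp
  exact offC_mem (ne_of_lt hlt) (C p.1 p.2)

lemma sAB (A B : Matrix (Fin n) (Fin n) K) (hB : B.IsSymm) : (A * B - B * Aᵀ).IsSymm := by
  rw [Matrix.IsSymm, transpose_sub, transpose_mul, transpose_mul, transpose_transpose, hB.eq,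
    msub, msub, add_comm]

lemma dAB (A B : Matrix (Fin n) (Fin n) K) (hB : B.IsSymm) (i : Fin n) :
    (A * B - B * Aᵀ) i i = 0 := by
  rw [Matrix.sub_apply, sub_eq_zero, Matrix.mul_apply, Matrix.mul_apply]
  refine Finset.sum_congr rfl fun k _ => ?_
  rw [Matrix.transpose_apply, hB.apply i k, mul_comm]

lemma comm_in_gOne {X Y : Matrix (Fin n ⊕ Fin n) (Fin n ⊕ Fin n) K}
    (hX : X ∈ gOneSet K n) (hY : Y ∈ gOneSet K n) : X * Y - Y * X ∈ gOneSet K n := by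
  obtain ⟨A, B, C, hBs, hB0, hCs, hC0, rfl⟩ := hX
  obtain ⟨A', B', C', hBs', hB0', hCs', hC0', rfl⟩ := hY
  have hsB : ((A * B' - B' * Aᵀ) - (A' * B - B * A'ᵀ)).IsSymm := by
    have h1 := sAB A B' hBs'
    have h2 := sAB A' B hBs
    rw [Matrix.IsSymm, transpose_sub, h1.eq, h2.eq]
  have hdB : ∀ i, ((A * B' - B' * Aᵀ) - (A' * B - B * A'ᵀ)) i i = 0 := by
    intro i
    rw [Matrix.sub_apply, dAB A B' hBs' i, dAB A' B hBs i, sub_zero]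
  have hsC : ((Aᵀ * C' - C' * A) - (A'ᵀ * C - C * A')).IsSymm := by
    have h1 := sAB Aᵀ C' hCs'
    have h2 := sAB A'ᵀ C hCs
    rw [transpose_transpose] at h1 h2
    rw [Matrix.IsSymm, transpose_sub, h1.eq, h2.eq]
  have hdC : ∀ i, ((Aᵀ * C' - C' * A) - (A'ᵀ * C - C * A')) i i = 0 := by
    intro i
    have h1 := dAB Aᵀ C' hCs' i
    have h2 := dAB A'ᵀ C hCs i
    rw [transpose_transpose] at h1 h2
    rw [Matrix.sub_apply, h1, h2, sub_zero]
  refine ⟨A * A' + B * C' - (A' * A + B' * C),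
    (A * B' - B' * Aᵀ) - (A' * B - B * A'ᵀ),
    (Aᵀ * C' - C' * A) - (A'ᵀ * C - C * A'), hsB, hdB, hsC, hdC, ?_⟩
  have e12 : A * B' + B * A'ᵀ - (A' * B + B' * Aᵀ)
      = (A * B' - B' * Aᵀ) - (A' * B - B * A'ᵀ) := by
    simp only [msub]; abel
  have e21 : C * A' + Aᵀ * C' - (C' * A + A'ᵀ * C)
      = (Aᵀ * C' - C' * A) - (A'ᵀ * C - C * A') := by
    simp only [msub]; abel
  have e22 : C * B' + Aᵀ * A'ᵀ - (C' * B + A'ᵀ * Aᵀ)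
      = (A * A' + B * C' - (A' * A + B' * C))ᵀ := by
    rw [transpose_sub, transpose_add, transpose_add, transpose_mul, transpose_mul,
      transpose_mul, transpose_mul, hBs.eq, hCs.eq, hBs'.eq, hCs'.eq]
    simp only [msub]; abel
  rw [fromBlocks_multiply, fromBlocks_multiply, fromBlocks_sub, e12, e21, e22]

/-- `gOneSet` as a submodule. -/
def gSub : Submodule K (Matrix (Fin n ⊕ Fin n) (Fin n ⊕ Fin n) K) where
  carrier := gOneSet K n
  zero_mem' := ⟨0, 0, 0, isSymm_zero, fun _ => rfl, isSymm_zero, fun _ => rfl, by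
    rw [transpose_zero, fromBlocks_zero]⟩
  add_mem' := by
    rintro X Y ⟨A, B, C, h1, h2, h3, h4, rfl⟩ ⟨A', B', C', h1', h2', h3', h4', rfl⟩
    refine ⟨A + A', B + B', C + C', ?_, ?_, ?_, ?_, ?_⟩
    · rw [Matrix.IsSymm, transpose_add, h1.eq, h1'.eq]
    · intro i; rw [Matrix.add_apply, h2 i, h2' i, add_zero]
    · rw [Matrix.IsSymm, transpose_add, h3.eq, h3'.eq]
    · intro i; rw [Matrix.add_apply, h4 i, h4' i, add_zero]
    · rw [fromBlocks_add, transpose_add]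
  smul_mem' := by
    rintro c X ⟨A, B, C, h1, h2, h3, h4, rfl⟩
    refine ⟨c • A, c • B, c • C, ?_, ?_, ?_, ?_, ?_⟩
    · rw [Matrix.IsSymm, transpose_smul, h1.eq]
    · intro i; rw [Matrix.smul_apply, h2 i, smul_zero]
    · rw [Matrix.IsSymm, transpose_smul, h3.eq]
    · intro i; rw [Matrix.smul_apply, h4 i, smul_zero]
    · rw [fromBlocks_smul, transpose_smul]

/-- `halfTrace` as a linear map. -/
noncomputable def htrL : Matrix (Fin n ⊕ Fin n) (Fin n ⊕ Fin n) K →ₗ[K] K where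
  toFun := halfTrace
  map_add' X Y := by simp [halfTrace, Finset.sum_add_distrib]
  map_smul' c X := by simp [halfTrace, Finset.mul_sum]

lemma htr_fromBlocks (A B C D : Matrix (Fin n) (Fin n) K) :
    halfTrace (fromBlocks A B C D) = Matrix.trace A := rfl

lemma htr_comm {X Y : Matrix (Fin n ⊕ Fin n) (Fin n ⊕ Fin n) K}
    (hX : X ∈ gOneSet K n) (hY : Y ∈ gOneSet K n) : halfTrace (X * Y - Y * X) = 0 := by
  obtain ⟨A, B, C, hBs, hB0, hCs, hC0, rfl⟩ := hX
  obtain ⟨A', B', C', hBs', hB0', hCs', hC0', rfl⟩ := hY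
  have hBC : Matrix.trace (B * C') = 0 := by
    have h : Matrix.trace (B * C') = ∑ i, ∑ k, B i k * C' k i := by
      rw [Matrix.trace]
      exact Finset.sum_congr rfl fun i _ => Matrix.mul_apply
    rw [h]
    exact pairing B C' hBs hB0 hCs'
  have hBC' : Matrix.trace (B' * C) = 0 := by
    have h : Matrix.trace (B' * C) = ∑ i, ∑ k, B' i k * C k i := by
      rw [Matrix.trace]
      exact Finset.sum_congr rfl fun i _ => Matrix.mul_apply
    rw [h]
    exact pairing B' C hBs' hB0' hCs
  rw [fromBlocks_multiply, fromBlocks_multiply, fromBlocks_sub, htr_fromBlocks,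
    trace_sub, trace_add, trace_add, hBC, hBC', trace_mul_comm A A']
  exact sub_self _

end HTAux

/-- For `p = 2`, the half-trace `htr` vanishes on the derived subalgebra `[g¹, g¹]`
(so `htr` is a trace on `g¹`), and moreover `[g¹, g¹] = {X ∈ g¹ : htr X = 0}`:
the second derived algebra `aut⁽²⁾(Π_{2n})` is exactly the traceless subalgebra
of `aut⁽¹⁾(Π_{2n})`. -/
theorem halfTrace_derived {K : Type*} [Field K] [CharP K 2] {n : ℕ} (hn : 1 ≤ n) :
    (∀ Z ∈ derivedGOne K n, halfTrace Z = 0) ∧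
    (derivedGOne K n : Set (Matrix (Fin n ⊕ Fin n) (Fin n ⊕ Fin n) K)) =
      {Z | Z ∈ gOneSet K n ∧ halfTrace Z = 0} := by
  have part1 : ∀ Z ∈ derivedGOne K n, halfTrace Z = 0 := by
    have hle : derivedGOne K n ≤ LinearMap.ker HTAux.htrL := by
      rw [derivedGOne, Submodule.span_le]
      rintro Z ⟨X, hX, Y, hY, rfl⟩
      exact LinearMap.mem_ker.mpr (HTAux.htr_comm hX hY)
    exact fun Z hZ => hle hZ
  refine ⟨part1, ?_⟩
  apply Set.Subset.antisymm
  · intro Z hZ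
    refine ⟨?_, part1 Z hZ⟩
    have hle : derivedGOne K n ≤ HTAux.gSub := by
      rw [derivedGOne, Submodule.span_le]
      rintro Z ⟨X, hX, Y, hY, rfl⟩
      exact HTAux.comm_in_gOne hX hY
    exact hle hZ
  · rintro Z ⟨⟨A, B, C, hBs, hB0, hCs, hC0, rfl⟩, htr0⟩
    have htrA : Matrix.trace A = 0 := by
      rw [HTAux.htr_fromBlocks A B C Aᵀ] at htr0
      exact htr0
    have hdec : fromBlocks A B C Aᵀ
        = fromBlocks A 0 0 Aᵀ + fromBlocks 0 B 0 0 + fromBlocks 0 0 C 0 := by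
      rw [fromBlocks_add, fromBlocks_add]
      simp
    rw [SetLike.mem_coe, hdec]
    exact Submodule.add_mem _
      (Submodule.add_mem _ (HTAux.traceless_mem hn A htrA) (HTAux.zdB_mem B hBs hB0))
      (HTAux.zdC_mem C hCs hC0)
end

section
/- The set ãut(Π_{2n}) := {[[A,B],[C,Aᵗ]] : A ∈ M_n(K) arbitrary, B ZD, C symmetric} is a Lie subalgebra of gl(2n,K) (it is closed under the commutator bracket), and it is sandwiched strictly between the derived algebra and the full automorphism algebra: {[[A,B],[C,Aᵗ]] : B, C ZD} ⊊ ãut(Π_{2n}) ⊊ aut(Π_{2n}). -/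
open Matrix

/-- The algebra `ãut(Π_{2n}) = F(pe)(2n)`: block matrices `[[A, B], [C, Aᵀ]]` with `A`
arbitrary, `B` symmetric with zero diagonal (ZD) and `C` symmetric. -/
def tildeAutSet (K : Type*) [Field K] (n : ℕ) :
    Set (Matrix (Fin n ⊕ Fin n) (Fin n ⊕ Fin n) K) :=
  {Z | ∃ A B C : Matrix (Fin n) (Fin n) K,
      B.IsSymm ∧ (∀ i, B i i = 0) ∧ C.IsSymm ∧
      Z = Matrix.fromBlocks A B C Aᵀ}

section Aux
variable {K : Type*} [Field K] [CharP K 2] {n : ℕ}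

private lemma matNeg' (M : Matrix (Fin n ⊕ Fin n) (Fin n ⊕ Fin n) K) : -M = M := by
  ext i j; exact CharTwo.neg_eq _

private lemma matAddSelf (M : Matrix (Fin n) (Fin n) K) : M + M = 0 := by
  ext i j; exact CharTwo.add_self_eq_zero _

/-- diagonal of `P*M + M*Pᵀ` vanishes when `M` is symmetric, in char 2 -/
private lemma diagZero (P M : Matrix (Fin n) (Fin n) K) (hM : M.IsSymm) (i : Fin n) :
    (P * M + M * Pᵀ) i i = 0 := by
  simp only [Matrix.add_apply, Matrix.mul_apply, Matrix.transpose_apply,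
    ← Finset.sum_add_distrib]
  apply Finset.sum_eq_zero
  intro j _
  have h : M j i = M i j := hM.apply i j
  rw [h, show P i j * M i j + M i j * P i j = 2 * (P i j * M i j) by ring,
    show (2:K) = 0 from CharP.cast_eq_zero K 2, zero_mul]

end Aux

/-- For `p = 2`, `ãut(Π_{2n})` is a Lie subalgebra of `gl(2n, K)` (closed under the
commutator bracket) and is sandwiched strictly between `aut⁽¹⁾(Π_{2n})` and
`aut(Π_{2n})`. -/
theorem tildeAut_isSubalgebra_and_strictly_between
    {K : Type*} [Field K] [CharP K 2] {n : ℕ} (hn : 1 ≤ n) :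
    (∀ X ∈ tildeAutSet K n, ∀ Y ∈ tildeAutSet K n, X * Y - Y * X ∈ tildeAutSet K n) ∧
    gOneSet K n ⊂ tildeAutSet K n ∧ tildeAutSet K n ⊂ autPiSet K n := by
  have i0 : Fin n := ⟨0, hn⟩
  refine ⟨?_, ?_, ?_⟩
  · -- closure under bracket
    rintro X ⟨A, B, C, hB, hBd, hC, rfl⟩ Y ⟨A', B', C', hB', hBd', hC', rfl⟩
    rw [sub_eq_add_neg, matNeg']
    refine ⟨A * A' + B * C' + (A' * A + B' * C),
            A * B' + B * A'ᵀ + (A' * B + B' * Aᵀ),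
            C * A' + Aᵀ * C' + (C' * A + A'ᵀ * C), ?_, ?_, ?_, ?_⟩
    · -- B'' symmetric
      unfold Matrix.IsSymm
      simp only [transpose_add, transpose_mul, transpose_transpose, hB.eq, hB'.eq]
      abel
    · -- B'' diagonal zero
      intro i
      have h1 := diagZero A B' hB' i
      have h2 := diagZero A' B hB i
      simp only [Matrix.add_apply] at h1 h2 ⊢
      linear_combination h1 + h2
    · -- C'' symmetric
      unfold Matrix.IsSymm
      simp only [transpose_add, transpose_mul, transpose_transpose, hC.eq, hC'.eq]
      abel
    · -- block identity
      rw [Matrix.fromBlocks_multiply, Matrix.fromBlocks_multiply, Matrix.fromBlocks_add]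
      simp only [transpose_add, transpose_mul, transpose_transpose, hB.eq, hB'.eq, hC.eq, hC'.eq]
      abel
  · -- gOne ⊂ tildeAut
    constructor
    · rintro Z ⟨A, B, C, hB, hBd, hC, _, rfl⟩
      exact ⟨A, B, C, hB, hBd, hC, rfl⟩
    · intro hsub
      have hmem : (Matrix.fromBlocks 0 0 1 (0 : Matrix (Fin n) (Fin n) K)) ∈ tildeAutSet K n := by
        refine ⟨0, 0, 1, ?_, fun i => rfl, ?_, ?_⟩
        · simp [Matrix.IsSymm]
        · simp [Matrix.IsSymm]
        · simp
      obtain ⟨A, B, C, hB, hBd, hC, hCd, hZ⟩ := hsub hmem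
      have := congrFun (congrFun hZ (Sum.inr i0)) (Sum.inl i0)
      simp only [Matrix.fromBlocks_apply₂₁, Matrix.one_apply_eq] at this
      exact (one_ne_zero : (1:K) ≠ 0) (this.trans (hCd i0))
  · -- tildeAut ⊂ autPi
    constructor
    · rintro Z ⟨A, B, C, hB, hBd, hC, rfl⟩
      show _ + _ = 0
      rw [PiGram, Matrix.fromBlocks_transpose, Matrix.fromBlocks_multiply,
        Matrix.fromBlocks_multiply, Matrix.fromBlocks_add]
      simp only [Matrix.mul_zero, Matrix.zero_mul, Matrix.mul_one, Matrix.one_mul,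
        zero_add, add_zero, Matrix.transpose_transpose, hB.eq, hC.eq, matAddSelf]
      exact Matrix.fromBlocks_zero
    · intro hsub
      have hmem : (Matrix.fromBlocks 0 1 0 (0 : Matrix (Fin n) (Fin n) K)) ∈ autPiSet K n := by
        show _ + _ = 0
        rw [PiGram, Matrix.fromBlocks_transpose, Matrix.fromBlocks_multiply,
          Matrix.fromBlocks_multiply, Matrix.fromBlocks_add]
        simp only [Matrix.mul_zero, Matrix.zero_mul, Matrix.mul_one, Matrix.one_mul,
          zero_add, add_zero, Matrix.transpose_zero, Matrix.transpose_one, matAddSelf]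
        exact Matrix.fromBlocks_zero
      obtain ⟨A, B, C, hB, hBd, hC, hZ⟩ := hsub hmem
      have := congrFun (congrFun hZ (Sum.inl i0)) (Sum.inr i0)
      simp only [Matrix.fromBlocks_apply₁₂, Matrix.one_apply_eq] at this
      exact (one_ne_zero : (1:K) ≠ 0) (this.trans (hBd i0))
end

section
/- For all f, g ∈ R one has the contact morphism identity [K_f, K_g] = K_{{f,g}}, where the bracket on the left is the commutator of derivations of R. -/
open MvPolynomial

/-- Index type for the variables `x₀, x₁, …, x_{2k}`: `none` is `x₀`, `Sum.inl i` is `x_i`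
(for `1 ≤ i ≤ k`) and `Sum.inr i` is `x_{k+i}`. -/
abbrev ContactIdx (k : ℕ) := Option (Fin k ⊕ Fin k)

/-- The polynomial ring `R = K[x₀, x₁, …, x_{2k}]`. -/
abbrev ContactRing (K : Type*) [Field K] (k : ℕ) := MvPolynomial (ContactIdx k) K

noncomputable section

variable (K : Type*) [Field K] (k : ℕ)

/-- The half Euler operator `E'(f) = Σ_{i=1}^{k} x_i ∂_i f`. -/
def eulerHalf (f : ContactRing K k) : ContactRing K k :=
  ∑ i : Fin k, X (some (Sum.inl i)) * pderiv (some (Sum.inl i)) f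

/-- The contact vector field `K_f`, acting on `R`:
`K_f(h) = (f + E'f)∂₀h + (∂₀f)(Σ x_i ∂_i h) + Σ (∂_{k+i}f ∂_i h + ∂_i f ∂_{k+i} h)`. -/
def contactField (f : ContactRing K k) : ContactRing K k → ContactRing K k := fun h =>
  (f + eulerHalf K k f) * pderiv (none : ContactIdx k) h
    + pderiv (none : ContactIdx k) f *
        (∑ i : Fin k, X (some (Sum.inl i)) * pderiv (some (Sum.inl i)) h)
    + ∑ i : Fin k,
        (pderiv (some (Sum.inr i)) f * pderiv (some (Sum.inl i)) h
          + pderiv (some (Sum.inl i)) f * pderiv (some (Sum.inr i)) h)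

/-- The contact bracket
`{f,g} = (∂₀f)(g + E'g) + (f + E'f)(∂₀g) + Σ (∂_i f ∂_{k+i} g + ∂_{k+i} f ∂_i g)`. -/
def contactBracket (f g : ContactRing K k) : ContactRing K k :=
  pderiv (none : ContactIdx k) f * (g + eulerHalf K k g)
    + (f + eulerHalf K k f) * pderiv (none : ContactIdx k) g
    + ∑ i : Fin k,
        (pderiv (some (Sum.inl i)) f * pderiv (some (Sum.inr i)) g
          + pderiv (some (Sum.inr i)) f * pderiv (some (Sum.inl i)) g)

end

/-- Partial derivatives commute. -/
theorem pderiv_comm' {σ R : Type*} [CommSemiring R] [DecidableEq σ] (i j : σ)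
    (f : MvPolynomial σ R) : pderiv i (pderiv j f) = pderiv j (pderiv i f) := by
  induction f using MvPolynomial.induction_on' with
  | add p q hp hq => simp [hp, hq]
  | monomial s a =>
    rcases eq_or_ne i j with rfl | hij
    · rfl
    · simp only [pderiv_monomial]
      rw [tsub_right_comm]
      congr 1
      rw [Finsupp.tsub_apply, Finsupp.tsub_apply, Finsupp.single_apply, Finsupp.single_apply,
        if_neg hij, if_neg (Ne.symm hij)]
      push_cast [Nat.sub_zero]
      ring

noncomputable section
variable (K : Type*) [Field K] (k : ℕ)

set_option maxHeartbeats 1000000 in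
/-- `contactField K k f` packaged as a derivation. -/
def contactDer (f : ContactRing K k) :
    Derivation K (ContactRing K k) (ContactRing K k) :=
  (f + eulerHalf K k f) • pderiv (none : ContactIdx k)
    + pderiv (none : ContactIdx k) f •
        ∑ i : Fin k, (X (some (Sum.inl i)) : ContactRing K k) • pderiv (R := K) (some (Sum.inl i))
    + ∑ i : Fin k,
        (pderiv (some (Sum.inr i)) f • pderiv (R := K) (some (Sum.inl i))
          + pderiv (some (Sum.inl i)) f • pderiv (R := K) (some (Sum.inr i)))

lemma derSum_apply {ι : Type*} (s : Finset ι)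
    (D : ι → Derivation K (ContactRing K k) (ContactRing K k)) (h : ContactRing K k) :
    (∑ i ∈ s, D i) h = ∑ i ∈ s, D i h := by
  classical
  induction s using Finset.induction_on with
  | empty => simp
  | insert _ _ hx ih => simp [Finset.sum_insert hx, ih]

lemma contactDer_apply (f h : ContactRing K k) :
    contactDer K k f h = contactField K k f h := by
  simp [contactDer, contactField, derSum_apply, smul_eq_mul, Finset.mul_sum]

lemma contactDer_X_none (f : ContactRing K k) :
    contactDer K k f (X (none : ContactIdx k)) = f + eulerHalf K k f := by
  simp [contactDer_apply, contactField, pderiv_X, Pi.single_apply]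

lemma contactDer_X_inl (f : ContactRing K k) (i : Fin k) :
    contactDer K k f (X (some (Sum.inl i) : ContactIdx k))
      = pderiv (none : ContactIdx k) f * X (some (Sum.inl i)) + pderiv (some (Sum.inr i)) f := by
  simp [contactDer_apply, contactField, pderiv_X, Pi.single_apply, Finset.mul_sum,
    Finset.sum_ite_eq, mul_comm]

lemma contactDer_X_inr (f : ContactRing K k) (i : Fin k) :
    contactDer K k f (X (some (Sum.inr i) : ContactIdx k)) = pderiv (some (Sum.inl i)) f := by
  simp [contactDer_apply, contactField, pderiv_X, Pi.single_apply, Finset.sum_ite_eq]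

end


noncomputable section
variable {K : Type*} [Field K] {k : ℕ}

lemma eulerHalf_add (a b : ContactRing K k) :
    eulerHalf K k (a + b) = eulerHalf K k a + eulerHalf K k b := by
  simp [eulerHalf, map_add, mul_add, Finset.sum_add_distrib]

lemma eulerHalf_mul (u v : ContactRing K k) :
    eulerHalf K k (u * v) = u * eulerHalf K k v + v * eulerHalf K k u := by
  simp only [eulerHalf, pderiv_mul, Finset.mul_sum, mul_add, Finset.sum_add_distrib,
    mul_comm, mul_left_comm, mul_assoc]
  exact add_comm _ _

lemma eulerHalf_sum {ι : Type*} (s : Finset ι) (φ : ι → ContactRing K k) :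
    eulerHalf K k (∑ i ∈ s, φ i) = ∑ i ∈ s, eulerHalf K k (φ i) := by
  simp only [eulerHalf, map_sum, Finset.mul_sum]
  exact Finset.sum_comm

lemma eulerHalf_X_inl (a : Fin k) :
    eulerHalf K k (X (some (Sum.inl a))) = X (some (Sum.inl a)) := by
  simp [eulerHalf, pderiv_X, Pi.single_apply, mul_ite, Finset.sum_ite_eq']

lemma pderiv_none_eulerHalf (g : ContactRing K k) :
    pderiv (none : ContactIdx k) (eulerHalf K k g)
      = eulerHalf K k (pderiv (none : ContactIdx k) g) := by
  simp only [eulerHalf, map_sum, pderiv_mul, pderiv_X, Pi.single_apply, reduceCtorEq,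
    ite_false, if_false, mul_zero, zero_mul, add_zero, zero_add]
  exact Finset.sum_congr rfl fun c _ => by rw [pderiv_comm']

lemma pderiv_inr_eulerHalf (g : ContactRing K k) (b : Fin k) :
    pderiv (some (Sum.inr b) : ContactIdx k) (eulerHalf K k g)
      = eulerHalf K k (pderiv (some (Sum.inr b)) g) := by
  simp only [eulerHalf, map_sum, pderiv_mul, pderiv_X, Pi.single_apply, reduceCtorEq,
    Option.some.injEq, Sum.inr.injEq, ite_false, if_false, mul_zero, zero_mul, add_zero,
    zero_add]
  · exact Finset.sum_congr rfl fun c _ => by rw [pderiv_comm']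

lemma pderiv_inl_eulerHalf (g : ContactRing K k) (a : Fin k) :
    pderiv (some (Sum.inl a) : ContactIdx k) (eulerHalf K k g)
      = pderiv (some (Sum.inl a)) g + eulerHalf K k (pderiv (some (Sum.inl a)) g) := by
  simp only [eulerHalf, map_sum, pderiv_mul, pderiv_X, Pi.single_apply, Option.some.injEq,
    Sum.inl.injEq, mul_ite, ite_mul, mul_one, one_mul, mul_zero, zero_mul,
    Finset.sum_add_distrib, Finset.sum_ite_eq', Finset.mem_univ, if_true]
  have hcomm : ∀ c : Fin k,
      X (some (Sum.inl c)) * pderiv (some (Sum.inl a)) (pderiv (some (Sum.inl c)) g)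
        = X (some (Sum.inl c)) * pderiv (some (Sum.inl c)) (pderiv (some (Sum.inl a)) g) :=
    fun c => by rw [pderiv_comm']
  simp only [hcomm]

end

section Key
variable {K : Type*} [Field K] [CharP K 2] {k : ℕ}

lemma contactField_def (f h : ContactRing K k) :
    contactField K k f h
      = (f + eulerHalf K k f) * pderiv (none : ContactIdx k) h
        + pderiv (none : ContactIdx k) f * eulerHalf K k h
        + ∑ i : Fin k,
            (pderiv (some (Sum.inr i)) f * pderiv (some (Sum.inl i)) h
              + pderiv (some (Sum.inl i)) f * pderiv (some (Sum.inr i)) h) := rfl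

set_option maxHeartbeats 2000000 in
lemma case_inr (f g : ContactRing K k) (a : Fin k) :
    contactDer K k f (contactDer K k g (X (some (Sum.inr a))))
        - contactDer K k g (contactDer K k f (X (some (Sum.inr a))))
      = contactDer K k (contactBracket K k f g) (X (some (Sum.inr a))) := by
  haveI : CharP (ContactRing K k) 2 := inferInstance
  rw [contactDer_X_inr, contactDer_X_inr, contactDer_X_inr,
    contactDer_apply, contactDer_apply, CharTwo.sub_eq_add]
  simp only [contactField_def, contactBracket, map_add, map_sum, pderiv_mul,
    pderiv_none_eulerHalf, pderiv_inl_eulerHalf, pderiv_inr_eulerHalf,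
    eulerHalf_add, eulerHalf_mul, eulerHalf_sum, eulerHalf_X_inl,
    pderiv_X, Pi.single_apply, Option.some.injEq, Sum.inl.injEq, Sum.inr.injEq, reduceCtorEq,
    ite_true, ite_false, mul_ite, ite_mul, mul_one, one_mul, mul_zero, zero_mul, add_zero,
    zero_add, Finset.sum_ite_eq, Finset.sum_ite_eq', Finset.mem_univ, if_true,
    Finset.mul_sum, Finset.sum_mul, mul_add, add_mul, Finset.sum_add_distrib]
  rw [← sub_eq_zero, CharTwo.sub_eq_add]
  try simp only [Finset.mul_sum, Finset.sum_mul, mul_add, add_mul, Finset.sum_add_distrib]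
  try simp only [pderiv_comm', mul_comm, mul_left_comm, mul_assoc]
  abel_nf
  have h2 : ∀ x : ContactRing K k, (2 : ℕ) • x = 0 := fun x => CharTwo.two_nsmul x
  have h4 : ∀ x : ContactRing K k, (4 : ℕ) • x = 0 := fun x => by
    rw [show (4 : ℕ) = 2 * 2 by norm_num, mul_nsmul, h2]
  have h2z : ∀ x : ContactRing K k, (2 : ℤ) • x = 0 := fun x => CharTwo.two_zsmul x
  have h4z : ∀ x : ContactRing K k, (4 : ℤ) • x = 0 := fun x => by
    rw [show (4 : ℤ) = 2 * 2 by norm_num, mul_smul, h2z]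
  try simp only [h2, h4, h2z, h4z, add_zero, zero_add, smul_zero]

set_option maxHeartbeats 2000000 in
lemma case_inl (f g : ContactRing K k) (a : Fin k) :
    contactDer K k f (contactDer K k g (X (some (Sum.inl a))))
        - contactDer K k g (contactDer K k f (X (some (Sum.inl a))))
      = contactDer K k (contactBracket K k f g) (X (some (Sum.inl a))) := by
  haveI : CharP (ContactRing K k) 2 := inferInstance
  rw [contactDer_X_inl, contactDer_X_inl, contactDer_X_inl,
    contactDer_apply, contactDer_apply, CharTwo.sub_eq_add]
  simp only [contactField_def, contactBracket, map_add, map_sum, pderiv_mul,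
    pderiv_none_eulerHalf, pderiv_inl_eulerHalf, pderiv_inr_eulerHalf,
    eulerHalf_add, eulerHalf_mul, eulerHalf_sum, eulerHalf_X_inl,
    pderiv_X, Pi.single_apply, Option.some.injEq, Sum.inl.injEq, Sum.inr.injEq, reduceCtorEq,
    ite_true, ite_false, mul_ite, ite_mul, mul_one, one_mul, mul_zero, zero_mul, add_zero,
    zero_add, Finset.sum_ite_eq, Finset.sum_ite_eq', Finset.mem_univ, if_true,
    Finset.mul_sum, Finset.sum_mul, mul_add, add_mul, Finset.sum_add_distrib]
  rw [← sub_eq_zero, CharTwo.sub_eq_add]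
  try simp only [Finset.mul_sum, Finset.sum_mul, mul_add, add_mul, Finset.sum_add_distrib]
  try simp only [pderiv_comm', mul_comm, mul_left_comm, mul_assoc]
  abel_nf
  have h2 : ∀ x : ContactRing K k, (2 : ℕ) • x = 0 := fun x => CharTwo.two_nsmul x
  have h4 : ∀ x : ContactRing K k, (4 : ℕ) • x = 0 := fun x => by
    rw [show (4 : ℕ) = 2 * 2 by norm_num, mul_nsmul, h2]
  have h2z : ∀ x : ContactRing K k, (2 : ℤ) • x = 0 := fun x => CharTwo.two_zsmul x
  have h4z : ∀ x : ContactRing K k, (4 : ℤ) • x = 0 := fun x => by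
    rw [show (4 : ℤ) = 2 * 2 by norm_num, mul_smul, h2z]
  try simp only [h2, h4, h2z, h4z, add_zero, zero_add, smul_zero]

set_option maxHeartbeats 2000000 in
lemma case_none (f g : ContactRing K k) :
    contactDer K k f (contactDer K k g (X (none : ContactIdx k)))
        - contactDer K k g (contactDer K k f (X (none : ContactIdx k)))
      = contactDer K k (contactBracket K k f g) (X (none : ContactIdx k)) := by
  haveI : CharP (ContactRing K k) 2 := inferInstance
  rw [contactDer_X_none, contactDer_X_none, contactDer_X_none,
    contactDer_apply, contactDer_apply, CharTwo.sub_eq_add]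
  simp only [contactField_def, contactBracket, map_add, map_sum, pderiv_mul,
    pderiv_none_eulerHalf, pderiv_inl_eulerHalf, pderiv_inr_eulerHalf,
    eulerHalf_add, eulerHalf_mul, eulerHalf_sum, eulerHalf_X_inl,
    pderiv_X, Pi.single_apply, Option.some.injEq, Sum.inl.injEq, Sum.inr.injEq, reduceCtorEq,
    ite_true, ite_false, mul_ite, ite_mul, mul_one, one_mul, mul_zero, zero_mul, add_zero,
    zero_add, Finset.sum_ite_eq, Finset.sum_ite_eq', Finset.mem_univ, if_true,
    Finset.mul_sum, Finset.sum_mul, mul_add, add_mul, Finset.sum_add_distrib]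
  rw [← sub_eq_zero, CharTwo.sub_eq_add]
  try simp only [Finset.mul_sum, Finset.sum_mul, mul_add, add_mul, Finset.sum_add_distrib]
  try simp only [pderiv_comm', mul_comm, mul_left_comm, mul_assoc]
  abel_nf
  have h2 : ∀ x : ContactRing K k, (2 : ℕ) • x = 0 := fun x => CharTwo.two_nsmul x
  have h4 : ∀ x : ContactRing K k, (4 : ℕ) • x = 0 := fun x => by
    rw [show (4 : ℕ) = 2 * 2 by norm_num, mul_nsmul, h2]
  have h2z : ∀ x : ContactRing K k, (2 : ℤ) • x = 0 := fun x => CharTwo.two_zsmul x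
  have h4z : ∀ x : ContactRing K k, (4 : ℤ) • x = 0 := fun x => by
    rw [show (4 : ℤ) = 2 * 2 by norm_num, mul_smul, h2z]
  try simp only [h2, h4, h2z, h4z, add_zero, zero_add, smul_zero]

end Key

/-- For `p = 2`, the contact morphism identity `[K_f, K_g] = K_{{f,g}}` holds, where the
bracket on the left is the commutator of derivations of `R`. -/
theorem contactField_commutator {K : Type*} [Field K] [CharP K 2] {k : ℕ} (hk : 1 ≤ k)
    (f g : ContactRing K k) :
    ∀ h : ContactRing K k,
      contactField K k f (contactField K k g h) - contactField K k g (contactField K k f h)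
        = contactField K k (contactBracket K k f g) h := by
  intro h
  have key : ⁅contactDer K k f, contactDer K k g⁆
      = contactDer K k (contactBracket K k f g) := by
    apply MvPolynomial.derivation_ext
    rintro (_ | a | b)
    · rw [Derivation.commutator_apply]; exact case_none f g
    · rw [Derivation.commutator_apply]; exact case_inl f g a
    · rw [Derivation.commutator_apply]; exact case_inr f g b
  have h1 : contactDer K k f (contactDer K k g h) - contactDer K k g (contactDer K k f h)
      = contactDer K k (contactBracket K k f g) h := by
    rw [← Derivation.commutator_apply, key]
  simpa only [contactDer_apply] using h1
end

section
/- The bracket defined above makes L = W ⊕ A ⊕ A a Lie algebra over K: it is K-bilinear, alternating ([x,x] = 0 for all x ∈ L), and satisfies the Jacobi identity [x,[y,z]] + [y,[z,x]] + [z,[x,y]] = 0 for all x, y, z ∈ L. (This is Brown's characteristic-2 analog L of the Melikyan construction, whose suitably graded truncated version contains the simple Shen Lie algebra.) -/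
set_option maxHeartbeats 4000000


open MvPolynomial

/-- The polynomial ring `A = K[u₁, u₂]` (index `0` is `u₁`, index `1` is `u₂`). -/
abbrev A2 (K : Type*) [Field K] := MvPolynomial (Fin 2) K

/-- Vector fields `a∂₁ + b∂₂` on `A`, encoded by the pair of coefficients `(a, b)`. -/
abbrev VF2 (K : Type*) [Field K] := A2 K × A2 K

/-- Brown's space `L = W ⊕ A·vol ⊕ A`, elements `(D, v, f)`. -/
abbrev BrownL (K : Type*) [Field K] := VF2 K × A2 K × A2 K

noncomputable section

variable (K : Type*) [Field K]

/-- The action of a vector field `D = a∂₁ + b∂₂` on a function. -/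
def vfAct (D : VF2 K) (h : A2 K) : A2 K := D.1 * pderiv 0 h + D.2 * pderiv 1 h

/-- The divergence `Div(a∂₁ + b∂₂) = ∂₁a + ∂₂b`. -/
def vfDiv (D : VF2 K) : A2 K := pderiv 0 D.1 + pderiv 1 D.2

/-- The Hamiltonian field `H_f = (∂₁f)∂₂ + (∂₂f)∂₁`, as a coefficient pair. -/
def hamVF (f : A2 K) : VF2 K := (pderiv 1 f, pderiv 0 f)

/-- The commutator `DD' − D'D` of vector fields, as a coefficient pair. -/
def vfComm (D D' : VF2 K) : VF2 K :=
  (vfAct K D D'.1 - vfAct K D' D.1, vfAct K D D'.2 - vfAct K D' D.2)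

/-- Brown's bracket on `L = W ⊕ A·vol ⊕ A`:
`[(D,v,f), (D',v',f')] = (DD' − D'D + v·H_{f'} + v'·H_f,
  D(v') + v'·Div D + D'(v) + v·Div D' + H_f(f'), D(f') + D'(f))`. -/
def brownBr (x y : BrownL K) : BrownL K :=
  ( vfComm K x.1 y.1 + x.2.1 • hamVF K y.2.2 + y.2.1 • hamVF K x.2.2,
    vfAct K x.1 y.2.1 + y.2.1 * vfDiv K x.1 + vfAct K y.1 x.2.1 + x.2.1 * vfDiv K y.1
      + vfAct K (hamVF K x.2.2) y.2.2,
    vfAct K x.1 y.2.2 + vfAct K y.1 x.2.2 )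

end

section aux

variable {K : Type*} [Field K]

lemma pderiv_pderiv_comm (p : A2 K) :
    pderiv 1 (pderiv 0 p) = pderiv 0 (pderiv 1 p) := by
  induction p using MvPolynomial.induction_on with
  | C a => simp
  | add p q hp hq => simp [hp, hq]
  | mul_X p i hp =>
    fin_cases i <;>
      simp [pderiv_mul, hp, pderiv_X_self, pderiv_X_of_ne (by decide : (0 : Fin 2) ≠ 1),
        pderiv_X_of_ne (by decide : (1 : Fin 2) ≠ 0)] <;> ring

end aux

/-- For `p = 2`, Brown's bracket makes `L = W ⊕ A ⊕ A` a Lie algebra over `K`: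
it is `K`-bilinear, alternating, and satisfies the Jacobi identity. -/
theorem brownBr_isLieAlgebra {K : Type*} [Field K] [CharP K 2] :
    (∀ x y z : BrownL K, brownBr K (x + y) z = brownBr K x z + brownBr K y z) ∧
    (∀ x y z : BrownL K, brownBr K x (y + z) = brownBr K x y + brownBr K x z) ∧
    (∀ (c : K) (x y : BrownL K), brownBr K (c • x) y = c • brownBr K x y) ∧
    (∀ (c : K) (x y : BrownL K), brownBr K x (c • y) = c • brownBr K x y) ∧
    (∀ x : BrownL K, brownBr K x x = 0) ∧
    (∀ x y z : BrownL K,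
      brownBr K x (brownBr K y z) + brownBr K y (brownBr K z x)
        + brownBr K z (brownBr K x y) = 0) := by
  have h2 : (2 : A2 K) = 0 := CharTwo.two_eq_zero
  have h4 : (4 : A2 K) = 0 := by rw [show (4 : A2 K) = 2 * 2 by norm_num, h2, mul_zero]
  refine ⟨?_, ?_, ?_, ?_, ?_, ?_⟩
  · intro x y z
    simp only [brownBr, vfComm, vfAct, vfDiv, hamVF, Prod.fst_add, Prod.snd_add,
      Prod.mk_add_mk, Prod.mk.injEq, Prod.smul_mk, smul_eq_mul, map_add]
    refine ⟨⟨?_, ?_⟩, ?_, ?_⟩ <;> ring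
  · intro x y z
    simp only [brownBr, vfComm, vfAct, vfDiv, hamVF, Prod.fst_add, Prod.snd_add,
      Prod.mk_add_mk, Prod.mk.injEq, Prod.smul_mk, smul_eq_mul, map_add]
    refine ⟨⟨?_, ?_⟩, ?_, ?_⟩ <;> ring
  · intro c x y
    refine Prod.ext (Prod.ext ?_ ?_) (Prod.ext ?_ ?_) <;>
      · simp only [brownBr, vfComm, vfAct, vfDiv, hamVF, Prod.smul_fst, Prod.smul_snd,
          Prod.smul_mk, Prod.mk_add_mk, smul_eq_mul, smul_eq_C_mul, pderiv_C_mul, map_add]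
        ring
  · intro c x y
    refine Prod.ext (Prod.ext ?_ ?_) (Prod.ext ?_ ?_) <;>
      · simp only [brownBr, vfComm, vfAct, vfDiv, hamVF, Prod.smul_fst, Prod.smul_snd,
          Prod.smul_mk, Prod.mk_add_mk, smul_eq_mul, smul_eq_C_mul, pderiv_C_mul, map_add]
        ring
  · intro x
    refine Prod.ext (Prod.ext ?_ ?_) (Prod.ext ?_ ?_) <;>
      · simp only [brownBr, vfComm, vfAct, vfDiv, hamVF, Prod.smul_mk, smul_eq_mul,
          Prod.mk_add_mk, Prod.fst_zero, Prod.snd_zero]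
        ring_nf
        simp only [h2, h4, mul_zero, zero_mul, add_zero, zero_add, mul_comm]
  · intro x y z
    refine Prod.ext (Prod.ext ?_ ?_) (Prod.ext ?_ ?_) <;>
      · simp only [brownBr, vfComm, vfAct, vfDiv, hamVF, Prod.smul_mk, smul_eq_mul,
          Prod.mk_add_mk, Prod.fst_add, Prod.snd_add, Prod.fst_zero, Prod.snd_zero]
        simp only [map_add, map_sub, map_neg, pderiv_mul, pderiv_pderiv_comm]
        ring_nf
        simp only [h2, h4, mul_zero, zero_mul, add_zero, zero_add, mul_comm]
end

section
/- The derivation D_n := (x₁·x₂·⋯·x_{n−1})·∂_n belongs to S (it is divergence-free), but D_n does not belong to the derived subalgebra [S, S], i.e. D_n is not a K-linear combination of commutators of elements of S. (Hence svect(n; N_s) in characteristic 2 is not equal to its derived algebra.) -/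
open MvPolynomial

/-- The polynomial ring `K[x₁, …, xₙ]`, whose quotient by the squares of the variables is
the algebra `A = O(n; N_s)` of truncated polynomials in characteristic 2. -/
abbrev SR (K : Type*) [Field K] (n : ℕ) := MvPolynomial (Fin n) K

noncomputable section

variable (K : Type*) [Field K] (n : ℕ)

/-- The ideal `(x₁², …, xₙ²)`, so that `A = K[x₁,…,xₙ] ⧸ sqIdeal` is the truncated
polynomial algebra; working modulo this ideal encodes working in `A` (the partial
derivatives descend to `A` since `∂_i(x_i²) = 2x_i = 0` in characteristic 2). -/
def sqIdeal : Ideal (SR K n) :=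
  Ideal.span (Set.range fun i : Fin n => (X i : SR K n) ^ 2)

/-- The coefficients of the commutator `[Σ f_i ∂_i, Σ g_i ∂_i]` of vector fields. -/
def vfBr (f g : Fin n → SR K n) : Fin n → SR K n := fun m =>
  ∑ i : Fin n, (f i * pderiv i (g m) - g i * pderiv i (f m))

/-- A vector field `Σ f_i ∂_i` is divergence-free on `A` iff `Σ ∂_i f_i = 0` in `A`,
i.e. `Σ ∂_i f_i ∈ sqIdeal`; these fields form `S = svect(n; N_s)`. -/
def IsDivFree (f : Fin n → SR K n) : Prop :=
  (∑ i : Fin n, pderiv i (f i)) ∈ sqIdeal K n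

end

/-- The distinguished vector field `D_n = (x₁⋯x_{n−1})·∂_n`. -/
noncomputable def Dlast (K : Type*) [Field K] (n : ℕ) (hn : 2 ≤ n) :
    Fin n → SR K n := fun m =>
  if m = (⟨n - 1, by omega⟩ : Fin n) then
    ∏ i ∈ Finset.univ.erase (⟨n - 1, by omega⟩ : Fin n), X i
  else 0

/-- Coefficients at squarefree monomials vanish on elements of `sqIdeal`. -/
lemma coeff_eq_zero_of_mem_sqIdeal {K : Type*} [Field K] {n : ℕ}
    {p : SR K n} (hp : p ∈ sqIdeal K n)
    {d : Fin n →₀ ℕ} (hd : ∀ i, d i ≤ 1) : coeff d p = 0 := by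
  have H : ∀ q ∈ sqIdeal K n, ∀ d : Fin n →₀ ℕ, (∀ i, d i ≤ 1) → coeff d q = 0 := by
    intro q hq
    refine Submodule.span_induction ?_ ?_ ?_ ?_ hq
    · rintro x ⟨i, rfl⟩ d hd
      show coeff d (X i ^ 2) = 0
      rw [X_pow_eq_monomial, coeff_monomial, if_neg]
      intro h
      have := hd i
      rw [← h, Finsupp.single_eq_same] at this
      omega
    · intro d _; simp
    · intro x y _ _ hx hy d hd
      rw [coeff_add, hx d hd, hy d hd, add_zero]
    · intro a x _ hx d hd
      rw [smul_eq_mul, coeff_mul]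
      refine Finset.sum_eq_zero fun z hz => ?_
      rw [Finset.HasAntidiagonal.mem_antidiagonal] at hz
      have : ∀ i, z.2 i ≤ 1 := fun i => by
        have : z.1 i + z.2 i = d i := by rw [← Finsupp.add_apply, hz]
        have := hd i; omega
      rw [hx z.2 this, mul_zero]
  exact H p hp d hd

/-- In characteristic 2, the coefficient of `μ` in `∂ᵢ q` vanishes if `μ i = 1`. -/
lemma coeff_pderiv_eq_zero {K : Type*} [Field K] [CharP K 2] {n : ℕ}
    {μ : Fin n →₀ ℕ} {i : Fin n} (h : μ i = 1) (q : SR K n) :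
    coeff μ (pderiv i q) = 0 := by
  induction q using MvPolynomial.induction_on' with
  | add p q hp hq => rw [map_add, coeff_add, hp, hq, add_zero]
  | monomial s a =>
    rw [pderiv_monomial, coeff_monomial]
    split_ifs with hs
    · have hsi : s i = 2 := by
        have h1 : s i - 1 = 1 := by
          have h2 := DFunLike.congr_fun hs i
          rw [Finsupp.tsub_apply, Finsupp.single_eq_same, h] at h2
          exact h2
        have h0 : s i ≠ 0 := by
          intro h0
          have : s - Finsupp.single i 1 = s := by
            ext j
            rw [Finsupp.tsub_apply, Finsupp.single_apply]
            split_ifs with hj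
            · subst hj; omega
            · omega
          rw [this] at hs; rw [hs] at h0; omega
        omega
      rw [hsi]
      have : ((2 : ℕ) : K) = 0 := by exact_mod_cast CharP.cast_eq_zero K 2
      rw [this, mul_zero]
    · rfl

lemma prod_X_eq_monomial {K : Type*} [Field K] {n : ℕ} (s : Finset (Fin n)) :
    (∏ i ∈ s, X i : SR K n) = monomial (∑ i ∈ s, Finsupp.single i 1) 1 := by
  induction s using Finset.induction with
  | empty => simp
  | @insert a s h ih =>
    rw [Finset.prod_insert h, Finset.sum_insert h, ih, X, monomial_mul, one_mul]


/-- For `p = 2`, the field `D_n = (x₁⋯x_{n−1})∂_n` is divergence-free but does not lie in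
the derived subalgebra `[S, S]` of `S = svect(n; N_s)`: in the truncated polynomial algebra
`A` (i.e. modulo `sqIdeal`, componentwise), `D_n` is not a `K`-linear combination of
commutators of divergence-free vector fields.  Hence `svect(n; N_s)` is not equal to its
derived algebra. -/
theorem Dlast_not_in_derived {K : Type*} [Field K] [CharP K 2] (n : ℕ) (hn : 2 ≤ n) :
    IsDivFree K n (Dlast K n hn) ∧
    ¬ ∃ (m : ℕ) (c : Fin m → K) (f g : Fin m → Fin n → SR K n),
        (∀ t, IsDivFree K n (f t) ∧ IsDivFree K n (g t)) ∧
        (∀ j : Fin n,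
          Dlast K n hn j - (∑ t, c t • vfBr K n (f t) (g t) j) ∈ sqIdeal K n) := by
  have hn1 : n - 1 < n := by omega
  set ℓ : Fin n := ⟨n - 1, hn1⟩ with hℓ
  set μ : Fin n →₀ ℕ := ∑ i ∈ Finset.univ.erase ℓ, Finsupp.single i 1 with hμ
  have hμ_apply : ∀ j : Fin n, μ j = if j = ℓ then 0 else 1 := by
    intro j
    rw [hμ, Finsupp.finset_sum_apply]
    split_ifs with hj
    · subst hj
      refine Finset.sum_eq_zero fun i hi => ?_
      rw [Finsupp.single_apply, if_neg (Finset.ne_of_mem_erase hi)]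
    · rw [Finset.sum_eq_single j (fun i _ hi => by
        rw [Finsupp.single_apply, if_neg hi]) (fun hj' => by
        exact absurd (Finset.mem_erase.mpr ⟨hj, Finset.mem_univ j⟩) hj'),
        Finsupp.single_eq_same]
  have hμ_le : ∀ i, μ i ≤ 1 := fun i => by rw [hμ_apply i]; split_ifs <;> omega
  have hμℓ : μ ℓ = 0 := by rw [hμ_apply]; simp
  have hμne : ∀ i : Fin n, i ≠ ℓ → μ i = 1 := fun i hi => by rw [hμ_apply, if_neg hi]
  have hDl : Dlast K n hn ℓ = monomial μ 1 := by
    rw [Dlast, if_pos rfl, prod_X_eq_monomial]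
  -- key: coeff μ of vfBr of divergence-free fields vanishes
  have key : ∀ f g : Fin n → SR K n, IsDivFree K n f → IsDivFree K n g →
      coeff μ (vfBr K n f g ℓ) = 0 := by
    intro f g hf hg
    have identity : vfBr K n f g ℓ
        = (∑ i : Fin n, pderiv i (f i * g ℓ - f ℓ * g i))
          - (∑ i : Fin n, pderiv i (f i)) * g ℓ
          + (∑ i : Fin n, pderiv i (g i)) * f ℓ := by
      rw [vfBr, Finset.sum_mul, Finset.sum_mul, ← Finset.sum_sub_distrib,
        ← Finset.sum_add_distrib]
      refine Finset.sum_congr rfl fun i _ => ?_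
      rw [map_sub, pderiv_mul, pderiv_mul]
      ring
    rw [identity, coeff_add, coeff_sub]
    have h1 : coeff μ (∑ i : Fin n, pderiv i (f i * g ℓ - f ℓ * g i)) = 0 := by
      rw [coeff_sum]
      refine Finset.sum_eq_zero fun i _ => ?_
      rcases eq_or_ne i ℓ with rfl | hi
      · rw [sub_self, map_zero, coeff_zero]
      · exact coeff_pderiv_eq_zero (hμne i hi) _
    have h2 : coeff μ ((∑ i : Fin n, pderiv i (f i)) * g ℓ) = 0 :=
      coeff_eq_zero_of_mem_sqIdeal (Ideal.mul_mem_right _ _ hf) hμ_le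
    have h3 : coeff μ ((∑ i : Fin n, pderiv i (g i)) * f ℓ) = 0 :=
      coeff_eq_zero_of_mem_sqIdeal (Ideal.mul_mem_right _ _ hg) hμ_le
    rw [h1, h2, h3]; ring
  constructor
  · -- divergence-free
    rw [IsDivFree]
    have : ∀ i : Fin n, pderiv i (Dlast K n hn i) =
        if i = ℓ then pderiv i (Dlast K n hn i) else 0 := by
      intro i
      split_ifs with hi
      · rfl
      · rw [Dlast, if_neg hi, map_zero]
    rw [Finset.sum_congr rfl fun i _ => this i, Finset.sum_ite_eq' Finset.univ ℓ,
      if_pos (Finset.mem_univ ℓ), hDl, pderiv_monomial, hμℓ]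
    simp
  · rintro ⟨m, c, f, g, hdiv, hmem⟩
    have h := hmem ℓ
    have hc := coeff_eq_zero_of_mem_sqIdeal h hμ_le
    rw [coeff_sub, hDl, coeff_monomial, if_pos rfl, coeff_sum] at hc
    have : ∀ t : Fin m, coeff μ (c t • vfBr K n (f t) (g t) ℓ) = 0 := by
      intro t
      rw [coeff_smul, key _ _ (hdiv t).1 (hdiv t).2, smul_zero]
    rw [Finset.sum_congr rfl fun t _ => this t, Finset.sum_const_zero, sub_zero] at hc
    exact one_ne_zero hc
end
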